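/- arXiv:2101.08451 — 7 statements merged into one kernel-verified Lean document; each statement's English description precedes it below -/
import Mathlib

section
/- There exists a unique continuous function V : [0,1] → ℝ such that V(φ0) = (T V)(φ0) for every φ0 ∈ [0,1]; that is, the Bellman operator T maps the space of continuous functions on [0,1] into itself and has a unique continuous fixed point. -/
/-- Advantaged-group threshold θ1(φ0,θ0) (for φ0 < 1). -/
noncomputable def θ1 (σ τ α φ0 θ0 : ℝ) : ℝ :=
  (σ * (1 - α) + (1 - φ0) * τ - φ0 * θ0) / (1 - φ0)

/-- Admissible threshold set Θ(φ0). -/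
def Θ (σ α φ0 : ℝ) : Set ℝ :=
  {θ0 | θ0 ∈ Set.Icc (0 : ℝ) σ ∧ φ0 * (1 - θ0 / σ) ≤ α ∧
    φ0 * (1 - θ0 / σ) + (1 - φ0) ≥ α}

/-- State transition S(φ0,θ0). -/
noncomputable def S (σ φ0 θ0 : ℝ) : ℝ := φ0 - (φ0 / (2 * σ)) * (σ ^ 2 - θ0 ^ 2)

/-- Reward function R(φ0,θ0), with the boundary convention at φ0 = 1. -/
noncomputable def R (σ τ α φ0 θ0 : ℝ) : ℝ :=
  if φ0 < 1 then
    (φ0 / (2 * σ)) * (σ ^ 2 - θ0 ^ 2)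
      + ((1 - φ0) / (2 * σ)) * ((σ + τ) ^ 2 - (θ1 σ τ α φ0 θ0) ^ 2)
  else (1 / (2 * σ)) * (σ ^ 2 - θ0 ^ 2)

/-- Bellman operator (T f)(φ0) = sup over admissible θ0 of R + γ f(S). -/
noncomputable def T (σ τ α γ : ℝ) (f : ℝ → ℝ) (φ0 : ℝ) : ℝ :=
  sSup ((fun θ0 => R σ τ α φ0 θ0 + γ * f (S σ φ0 θ0)) '' Θ σ α φ0)

/-- The tipping point φ0*. -/
noncomputable def φstar (σ τ α γ : ℝ) : ℝ :=
  max 0 (min (1 - α)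
    (1 - (α * σ / (2 * τ)) * (1 + Real.sqrt (1 + 2 * τ * γ / (1 - γ)))))

namespace BellmanAux
open Set

noncomputable def aa (σ α φ0 : ℝ) : ℝ := σ * max (φ0 - α) 0 / max φ0 α
noncomputable def bb (σ α φ0 : ℝ) : ℝ := σ * (1 - α) / max φ0 (1 - α)
noncomputable def cc (σ α φ0 t : ℝ) : ℝ := aa σ α φ0 + t * (bb σ α φ0 - aa σ α φ0)

variable {σ τ α φ0 t θ0 : ℝ}

lemma aa_nonneg (hσ : 0 < σ) (hα : 0 < α) : 0 ≤ aa σ α φ0 :=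
  div_nonneg (mul_nonneg hσ.le (le_max_right _ _)) (le_trans hα.le (le_max_right _ _))

lemma bb_nonneg (hσ : 0 < σ) (hα1 : α < 1) : 0 ≤ bb σ α φ0 :=
  div_nonneg (mul_nonneg hσ.le (by linarith)) (le_trans (by linarith) (le_max_right _ _))

lemma bb_le (hσ : 0 < σ) (hα1 : α < 1) : bb σ α φ0 ≤ σ := by
  rw [bb, div_le_iff₀ (lt_of_lt_of_le (by linarith) (le_max_right _ _))]
  nlinarith [le_max_right φ0 (1 - α)]

lemma aa_le (hσ : 0 < σ) (hα : 0 < α) (hφ1 : φ0 ≤ 1) : aa σ α φ0 ≤ σ := by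
  rw [aa, div_le_iff₀ (lt_of_lt_of_le hα (le_max_right _ _))]
  rcases max_cases (φ0 - α) 0 with ⟨h1, h2⟩ | ⟨h1, h2⟩ <;>
    rcases max_cases φ0 α with ⟨h3, h4⟩ | ⟨h3, h4⟩ <;> rw [h1, h3] <;> nlinarith

lemma phi_mul_aa (hσ : 0 < σ) (hα : 0 < α) (hφ0 : 0 ≤ φ0) :
    φ0 * aa σ α φ0 = σ * max (φ0 - α) 0 := by
  rcases le_or_gt φ0 α with h | h
  · rw [aa, max_eq_right (by linarith : φ0 - α ≤ 0)]; simp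
  · have hφpos : (0:ℝ) < φ0 := lt_trans hα h
    rw [aa, max_eq_left h.le, max_eq_left (by linarith : 0 ≤ φ0 - α)]
    field_simp

lemma phi_mul_bb (hσ : 0 < σ) (hα1 : α < 1) :
    φ0 * bb σ α φ0 = σ * min φ0 (1 - α) := by
  rcases le_or_gt φ0 (1 - α) with h | h
  · rw [bb, max_eq_right h, min_eq_left h]
    have : (1:ℝ) - α ≠ 0 := by linarith
    field_simp
  · have hφpos : (0:ℝ) < φ0 := lt_trans (by linarith) h
    rw [bb, max_eq_left h.le, min_eq_right h.le]
    field_simp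

lemma mem_Θ_iff (hσ : 0 < σ) :
    θ0 ∈ Θ σ α φ0 ↔ θ0 ∈ Icc 0 σ ∧ σ * (φ0 - α) ≤ φ0 * θ0 ∧ φ0 * θ0 ≤ σ * (1 - α) := by
  have e1 : φ0 * (1 - θ0 / σ) = (φ0 * (σ - θ0)) / σ := by field_simp
  show (_ ∧ _ ∧ _) ↔ _
  rw [e1, ge_iff_le, div_le_iff₀ hσ, ← sub_le_iff_le_add, le_div_iff₀ hσ, and_congr_right_iff]
  intro _
  constructor <;> rintro ⟨h1, h2⟩ <;> constructor <;> nlinarith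

lemma Θ_eq (hσ : 0 < σ) (hα : 0 < α) (hα1 : α < 1) (hφ : φ0 ∈ Icc (0:ℝ) 1) :
    Θ σ α φ0 = Icc (aa σ α φ0) (bb σ α φ0) := by
  obtain ⟨hφ0, hφ1⟩ := hφ
  ext θ0
  rw [mem_Θ_iff hσ, mem_Icc, mem_Icc]
  constructor
  · rintro ⟨⟨h0, hs⟩, h1, h2⟩
    constructor
    · rw [aa, div_le_iff₀ (lt_of_lt_of_le hα (le_max_right _ _))]
      rcases max_cases (φ0 - α) 0 with ⟨e1, l1⟩ | ⟨e1, l1⟩ <;>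
        rcases max_cases φ0 α with ⟨e2, l2⟩ | ⟨e2, l2⟩ <;> rw [e1, e2] <;> nlinarith
    · rw [bb, le_div_iff₀ (lt_of_lt_of_le (by linarith) (le_max_right _ _))]
      rcases max_cases φ0 (1 - α) with ⟨e2, l2⟩ | ⟨e2, l2⟩ <;> rw [e2] <;> nlinarith
  · rintro ⟨h1, h2⟩
    have hA : 0 ≤ aa σ α φ0 := aa_nonneg hσ hα
    have hB : bb σ α φ0 ≤ σ := bb_le hσ hα1
    refine ⟨⟨by linarith, by linarith⟩, ?_, ?_⟩
    · have := mul_le_mul_of_nonneg_left h1 hφ0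
      rw [phi_mul_aa hσ hα hφ0] at this
      have := le_max_left (φ0 - α) 0
      nlinarith
    · have := mul_le_mul_of_nonneg_left h2 hφ0
      rw [phi_mul_bb hσ hα1] at this
      have := min_le_right φ0 (1 - α)
      nlinarith

lemma aa_le_bb (hσ : 0 < σ) (hα : 0 < α) (hα1 : α < 1) (hφ : φ0 ∈ Icc (0:ℝ) 1) :
    aa σ α φ0 ≤ bb σ α φ0 := by
  obtain ⟨hφ0, hφ1⟩ := hφ
  rw [aa, bb, div_le_div_iff₀ (lt_of_lt_of_le hα (le_max_right _ _))
    (lt_of_lt_of_le (by linarith) (le_max_right _ _))]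
  rcases max_cases (φ0 - α) 0 with ⟨e1, l1⟩ | ⟨e1, l1⟩ <;>
    rcases max_cases φ0 α with ⟨e2, l2⟩ | ⟨e2, l2⟩ <;>
    rcases max_cases φ0 (1 - α) with ⟨e3, l3⟩ | ⟨e3, l3⟩ <;>
    rw [e1, e2, e3] <;>
    nlinarith [mul_nonneg (mul_nonneg hσ.le hφ0) (sub_nonneg.mpr hφ1),
      mul_nonneg (mul_nonneg hσ.le hα.le) (by linarith : (0:ℝ) ≤ 1 - α)]

lemma cc_mem (hab : aa σ α φ0 ≤ bb σ α φ0) (ht : t ∈ Icc (0:ℝ) 1) :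
    cc σ α φ0 t ∈ Icc (aa σ α φ0) (bb σ α φ0) := by
  obtain ⟨h0, h1⟩ := ht
  simp only [cc, mem_Icc]
  constructor <;> nlinarith

lemma cc_image (hab : aa σ α φ0 ≤ bb σ α φ0) :
    (fun t => cc σ α φ0 t) '' Icc (0:ℝ) 1 = Icc (aa σ α φ0) (bb σ α φ0) := by
  apply Subset.antisymm
  · rintro _ ⟨t, ht, rfl⟩; exact cc_mem hab ht
  · rintro θ0 ⟨h1, h2⟩
    rcases eq_or_lt_of_le hab with he | hlt
    · exact ⟨0, ⟨le_refl _, zero_le_one⟩, by simp only [cc]; rw [zero_mul]; linarith⟩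
    · refine ⟨(θ0 - aa σ α φ0) / (bb σ α φ0 - aa σ α φ0), ⟨?_, ?_⟩, ?_⟩
      · exact div_nonneg (by linarith) (by linarith)
      · rw [div_le_one (by linarith)]; linarith
      · have hne : bb σ α φ0 - aa σ α φ0 ≠ 0 := ne_of_gt (sub_pos.mpr hlt)
        simp only [cc]
        field_simp
        ring

noncomputable def PP (σ τ α φ0 t : ℝ) : ℝ :=
  σ * (1 - α) + (1 - φ0) * τ -
    (σ * max (φ0 - α) 0 + t * (σ * min φ0 (1 - α) - σ * max (φ0 - α) 0))

noncomputable def QQ (σ τ α φ0 t : ℝ) : ℝ :=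
  if φ0 < 1 then PP σ τ α φ0 t / (1 - φ0) else σ + τ - t * σ

noncomputable def Rn (σ τ α φ0 t : ℝ) : ℝ :=
  (φ0 / (2 * σ)) * (σ ^ 2 - (cc σ α φ0 t) ^ 2) +
    ((1 - φ0) / (2 * σ)) * ((σ + τ) ^ 2 - (QQ σ τ α φ0 t) ^ 2)

lemma PP_eq (hσ : 0 < σ) (hα : 0 < α) (hα1 : α < 1) (hφ0 : 0 ≤ φ0) :
    PP σ τ α φ0 t = σ * (1 - α) + (1 - φ0) * τ - φ0 * cc σ α φ0 t := by
  simp only [PP, cc]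
  rw [← phi_mul_aa hσ hα hφ0, ← phi_mul_bb hσ hα1]
  ring

lemma PP_factor (hm1 : α ≤ φ0) (hm2 : 1 - α ≤ φ0) :
    PP σ τ α φ0 t = (1 - φ0) * (σ + τ - t * σ) := by
  simp only [PP, max_eq_left (by linarith : (0:ℝ) ≤ φ0 - α), min_eq_right hm2]
  ring

lemma QQ_eq (hσ : 0 < σ) (hα : 0 < α) (hα1 : α < 1) (hφ0 : 0 ≤ φ0) (h1 : φ0 < 1) :
    QQ σ τ α φ0 t = θ1 σ τ α φ0 (cc σ α φ0 t) := by
  rw [QQ, if_pos h1, PP_eq hσ hα hα1 hφ0, θ1]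

lemma QQ_right (hm1 : α ≤ φ0) (hm2 : 1 - α ≤ φ0) :
    QQ σ τ α φ0 t = σ + τ - t * σ := by
  rw [QQ]
  split_ifs with h
  · rw [PP_factor hm1 hm2, mul_div_cancel_left₀ _ (by linarith : (1:ℝ) - φ0 ≠ 0)]
  · rfl

lemma Rn_eq_R (hσ : 0 < σ) (hα : 0 < α) (hα1 : α < 1) (hφ : φ0 ∈ Icc (0:ℝ) 1) :
    Rn σ τ α φ0 t = R σ τ α φ0 (cc σ α φ0 t) := by
  rw [R]
  split_ifs with h
  · rw [Rn, QQ_eq hσ hα hα1 hφ.1 h]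
  · have h1 : φ0 = 1 := le_antisymm hφ.2 (not_lt.mp h)
    subst h1
    rw [Rn]
    ring

lemma cont_aa (hα : 0 < α) : Continuous fun x : ℝ => aa σ α x := by
  apply Continuous.div
  · exact continuous_const.mul ((continuous_id.sub continuous_const).max continuous_const)
  · exact continuous_id.max continuous_const
  · exact fun x => ne_of_gt (lt_of_lt_of_le hα (le_max_right _ _))

lemma cont_bb (hα1 : α < 1) : Continuous fun x : ℝ => bb σ α x := by
  apply Continuous.div
  · exact continuous_const
  · exact continuous_id.max continuous_const
  · exact fun x => ne_of_gt (lt_of_lt_of_le (by linarith) (le_max_right _ _))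

lemma cont_cc (hα : 0 < α) (hα1 : α < 1) :
    Continuous fun p : ℝ × ℝ => cc σ α p.1 p.2 := by
  simp only [cc]
  exact ((cont_aa hα).comp continuous_fst).add (continuous_snd.mul
    (((cont_bb hα1).comp continuous_fst).sub ((cont_aa hα).comp continuous_fst)))

lemma cont_PP : Continuous fun p : ℝ × ℝ => PP σ τ α p.1 p.2 := by
  simp only [PP]
  apply Continuous.sub
  · exact continuous_const.add ((continuous_const.sub continuous_fst).mul continuous_const)
  · apply Continuous.add
    · exact (continuous_const.mul ((continuous_fst.sub continuous_const).max
        continuous_const))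
    · exact continuous_snd.mul (((continuous_const.mul (continuous_fst.min
        continuous_const))).sub (continuous_const.mul ((continuous_fst.sub
        continuous_const).max continuous_const)))

lemma cont_QQ (hα : 0 < α) (hα1 : α < 1) :
    ContinuousOn (fun p : ℝ × ℝ => QQ σ τ α p.1 p.2) (Icc (0:ℝ) 1 ×ˢ Icc (0:ℝ) 1) := by
  intro p hp
  rcases lt_or_eq_of_le (hp.1.2 : p.1 ≤ 1) with h | h
  · have hopen : IsOpen {q : ℝ × ℝ | q.1 < 1} := isOpen_lt continuous_fst continuous_const
    have hev : (fun q : ℝ × ℝ => QQ σ τ α q.1 q.2) =ᶠ[nhds p]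
        fun q => PP σ τ α q.1 q.2 / (1 - q.1) := by
      filter_upwards [hopen.mem_nhds h] with q hq
      rw [QQ, if_pos hq]
    have hca : ContinuousAt (fun q : ℝ × ℝ => PP σ τ α q.1 q.2 / (1 - q.1)) p := by
      apply ContinuousAt.div
      · exact cont_PP.continuousAt
      · exact (continuous_const.sub continuous_fst).continuousAt
      · exact ne_of_gt (by linarith)
    exact (hca.congr hev.symm).continuousWithinAt
  · have hm : max α (1 - α) < 1 := max_lt (by linarith) (by linarith)
    have hqq : ∀ q : ℝ × ℝ, max α (1 - α) < q.1 → QQ σ τ α q.1 q.2 = σ + τ - q.2 * σ :=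
      fun q hq => QQ_right ((le_max_left _ _).trans hq.le) ((le_max_right _ _).trans hq.le)
    have hev : (fun q : ℝ × ℝ => QQ σ τ α q.1 q.2) =ᶠ[nhdsWithin p (Icc (0:ℝ) 1 ×ˢ Icc (0:ℝ) 1)]
        fun q => σ + τ - q.2 * σ := by
      have hop : IsOpen {q : ℝ × ℝ | max α (1 - α) < q.1} :=
        isOpen_lt continuous_const continuous_fst
      filter_upwards [mem_nhdsWithin_of_mem_nhds
        (hop.mem_nhds (show max α (1 - α) < p.1 by rw [h]; exact hm))] with q hq
      exact hqq q hq
    have hcw : ContinuousWithinAt (fun q : ℝ × ℝ => σ + τ - q.2 * σ)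
        (Icc (0:ℝ) 1 ×ˢ Icc (0:ℝ) 1) p :=
      (continuous_const.sub (continuous_snd.mul continuous_const)).continuousWithinAt
    exact hcw.congr_of_eventuallyEq hev (hqq p (by rw [h]; exact hm))

lemma cont_Rn (hα : 0 < α) (hα1 : α < 1) :
    ContinuousOn (fun p : ℝ × ℝ => Rn σ τ α p.1 p.2) (Icc (0:ℝ) 1 ×ˢ Icc (0:ℝ) 1) := by
  simp only [Rn]
  apply ContinuousOn.add
  · exact ((continuous_fst.div_const _).mul
      (continuous_const.sub ((cont_cc hα hα1).pow 2))).continuousOn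
  · exact (((continuous_const.sub continuous_fst).div_const _).continuousOn).mul
      (continuousOn_const.sub ((cont_QQ hα hα1).pow 2))

lemma cont_S : Continuous fun p : ℝ × ℝ => S σ p.1 p.2 := by
  simp only [S]
  exact continuous_fst.sub ((continuous_fst.div_const _).mul
    (continuous_const.sub (continuous_snd.pow 2)))

lemma S_mem (hσ : 0 < σ) (hσ1 : σ ≤ 1) (hφ : φ0 ∈ Icc (0:ℝ) 1) (hθ : θ0 ∈ Icc 0 σ) :
    S σ φ0 θ0 ∈ Icc (0:ℝ) 1 := by
  obtain ⟨h0, h1⟩ := hφ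
  obtain ⟨h2, h3⟩ := hθ
  have h2σ : (0:ℝ) < 2 * σ := by linarith
  have hu : (σ ^ 2 - θ0 ^ 2) / (2 * σ) ≤ 1 := by rw [div_le_one h2σ]; nlinarith
  have hu0 : 0 ≤ (σ ^ 2 - θ0 ^ 2) / (2 * σ) := div_nonneg (by nlinarith) h2σ.le
  have e : φ0 / (2 * σ) * (σ ^ 2 - θ0 ^ 2) = φ0 * ((σ ^ 2 - θ0 ^ 2) / (2 * σ)) := by ring
  rw [S, mem_Icc, e]
  constructor <;> nlinarith

lemma cc_mem_Icc (hσ : 0 < σ) (hα : 0 < α) (hα1 : α < 1) (hφ : φ0 ∈ Icc (0:ℝ) 1)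
    (ht : t ∈ Icc (0:ℝ) 1) : cc σ α φ0 t ∈ Icc (0:ℝ) σ := by
  have h := cc_mem (aa_le_bb hσ hα hα1 hφ) ht
  exact ⟨(aa_nonneg hσ hα).trans h.1, h.2.trans (bb_le hσ hα1)⟩

lemma T_repr (hσ : 0 < σ) (hα : 0 < α) (hα1 : α < 1) (γ : ℝ) (f : ℝ → ℝ)
    (hφ : φ0 ∈ Icc (0:ℝ) 1) :
    T σ τ α γ f φ0 =
      sSup ((fun t => Rn σ τ α φ0 t + γ * f (S σ φ0 (cc σ α φ0 t))) '' Icc (0:ℝ) 1) := by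
  rw [T, Θ_eq hσ hα hα1 hφ, ← cc_image (aa_le_bb hσ hα hα1 hφ), ← Set.image_comp]
  congr 1
  apply Set.image_congr
  intro t ht
  simp only [Function.comp]
  rw [Rn_eq_R hσ hα hα1 hφ]

lemma sSup_le_sSup_add {F H : ℝ → ℝ} {K : Set ℝ} (hK : K.Nonempty)
    (hbH : BddAbove (H '' K)) {ε : ℝ} (h : ∀ x ∈ K, F x ≤ H x + ε) :
    sSup (F '' K) ≤ sSup (H '' K) + ε := by
  apply csSup_le (hK.image F)
  rintro _ ⟨x, hx, rfl⟩
  exact (h x hx).trans (add_le_add_left (le_csSup hbH (mem_image_of_mem H hx)) ε)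

lemma abs_sSup_sub_sSup_le {F H : ℝ → ℝ} {K : Set ℝ} (hK : K.Nonempty)
    (hbF : BddAbove (F '' K)) (hbH : BddAbove (H '' K)) {ε : ℝ}
    (h : ∀ x ∈ K, |F x - H x| ≤ ε) :
    |sSup (F '' K) - sSup (H '' K)| ≤ ε := by
  rw [abs_sub_le_iff]
  constructor
  · have h1 : sSup (F '' K) ≤ sSup (H '' K) + ε := sSup_le_sSup_add hK hbH
      (fun x hx => by have := (abs_sub_le_iff.mp (h x hx)).1; linarith)
    linarith
  · have h2 : sSup (H '' K) ≤ sSup (F '' K) + ε := sSup_le_sSup_add hK hbF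
      (fun x hx => by have := (abs_sub_le_iff.mp (h x hx)).2; linarith)
    linarith

lemma cont_sSup {G : ℝ × ℝ → ℝ}
    (hG : ContinuousOn G (Icc (0:ℝ) 1 ×ˢ Icc (0:ℝ) 1)) :
    ContinuousOn (fun x => sSup ((fun t => G (x, t)) '' Icc (0:ℝ) 1)) (Icc (0:ℝ) 1) := by
  have hcomp : IsCompact (Icc (0:ℝ) 1 ×ˢ Icc (0:ℝ) 1) := isCompact_Icc.prod isCompact_Icc
  have huc := hcomp.uniformContinuousOn_of_continuous hG
  rw [Metric.uniformContinuousOn_iff] at huc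
  have hslice : ∀ x ∈ Icc (0:ℝ) 1, ContinuousOn (fun t => G (x, t)) (Icc (0:ℝ) 1) := by
    intro x hx
    apply hG.comp (Continuous.continuousOn (by continuity))
    exact fun t ht => ⟨hx, ht⟩
  have hbdd : ∀ x ∈ Icc (0:ℝ) 1, BddAbove ((fun t => G (x, t)) '' Icc (0:ℝ) 1) := fun x hx =>
    (isCompact_Icc.image_of_continuousOn (hslice x hx)).bddAbove
  rw [Metric.continuousOn_iff]
  intro x hx ε hε
  obtain ⟨δ, hδ, hkey⟩ := huc (ε/2) (by linarith)
  refine ⟨δ, hδ, fun y hy hxy => ?_⟩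
  rw [Real.dist_eq]
  have hne : (Icc (0:ℝ) 1).Nonempty := nonempty_Icc.mpr zero_le_one
  have h2 : |sSup ((fun t => G (y, t)) '' Icc (0:ℝ) 1) -
      sSup ((fun t => G (x, t)) '' Icc (0:ℝ) 1)| ≤ ε/2 := by
    apply abs_sSup_sub_sSup_le hne (hbdd y hy) (hbdd x hx)
    intro t ht
    have hd : dist ((y, t) : ℝ × ℝ) (x, t) < δ := by
      rw [Prod.dist_eq, dist_self, max_eq_left dist_nonneg]
      exact hxy
    have := hkey (y, t) ⟨hy, ht⟩ (x, t) ⟨hx, ht⟩ hd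
    rw [Real.dist_eq] at this
    exact this.le
  linarith


end BellmanAux

open BellmanAux in
/-- There is a unique continuous function on [0,1] fixed by the Bellman operator. -/
theorem bellman_unique_continuous_fixed_point (σ τ α γ : ℝ) (hσ : 0 < σ)
    (hτ : 0 < τ) (hστ : σ + τ ≤ 1) (hα : 0 < α) (hα1 : α < 1)
    (hγ : 0 < γ) (hγ1 : γ < 1) :
    ∃ V : ℝ → ℝ,
      (ContinuousOn V (Set.Icc (0 : ℝ) 1) ∧
        ∀ φ0 ∈ Set.Icc (0 : ℝ) 1, V φ0 = T σ τ α γ V φ0) ∧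
      ∀ W : ℝ → ℝ,
        (ContinuousOn W (Set.Icc (0 : ℝ) 1) ∧
          ∀ φ0 ∈ Set.Icc (0 : ℝ) 1, W φ0 = T σ τ α γ W φ0) →
        ∀ x ∈ Set.Icc (0 : ℝ) 1, W x = V x := by
  classical
  have hσ1 : σ ≤ 1 := by linarith
  have hne : (Set.Icc (0:ℝ) 1).Nonempty := Set.nonempty_Icc.mpr zero_le_one
  -- extension operator
  let ext : C(Set.Icc (0:ℝ) 1, ℝ) → ℝ → ℝ := fun f x => f (Set.projIcc 0 1 zero_le_one x)
  have hext_cont : ∀ f, Continuous (ext f) := fun f => f.continuous.comp continuous_projIcc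
  have hext_eq : ∀ (f : C(Set.Icc (0:ℝ) 1, ℝ)) (x : ℝ) (hx : x ∈ Set.Icc (0:ℝ) 1),
      ext f x = f ⟨x, hx⟩ := by
    intro f x hx
    simp only [ext]
    rw [Set.projIcc_of_mem]
  -- parametrized objective
  have hGcont : ∀ f : C(Set.Icc (0:ℝ) 1, ℝ), ContinuousOn
      (fun p : ℝ × ℝ => Rn σ τ α p.1 p.2 + γ * ext f (S σ p.1 (cc σ α p.1 p.2)))
      (Set.Icc (0:ℝ) 1 ×ˢ Set.Icc (0:ℝ) 1) := by
    intro f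
    apply ContinuousOn.add (cont_Rn hα hα1)
    apply Continuous.continuousOn
    exact continuous_const.mul ((hext_cont f).comp
      (cont_S.comp (continuous_fst.prodMk (cont_cc hα hα1))))
  have hTr : ∀ (f : ℝ → ℝ), ∀ x ∈ Set.Icc (0:ℝ) 1, T σ τ α γ f x =
      sSup ((fun t => Rn σ τ α x t + γ * f (S σ x (cc σ α x t))) '' Set.Icc (0:ℝ) 1) :=
    fun f x hx => T_repr hσ hα hα1 γ f hx
  have hTcont : ∀ f : C(Set.Icc (0:ℝ) 1, ℝ),
      ContinuousOn (T σ τ α γ (ext f)) (Set.Icc (0:ℝ) 1) := by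
    intro f
    exact ContinuousOn.congr (cont_sSup (hGcont f)) (fun x hx => hTr (ext f) x hx)
  let Top : C(Set.Icc (0:ℝ) 1, ℝ) → C(Set.Icc (0:ℝ) 1, ℝ) := fun f =>
    ⟨fun x => T σ τ α γ (ext f) x, (hTcont f).restrict⟩
  -- boundedness of parametrized images
  have hinner : ∀ y : ℝ, Continuous fun t : ℝ => S σ y (cc σ α y t) := by
    intro y
    have h1 : Continuous fun t : ℝ => cc σ α y t :=
      (cont_cc hα hα1).comp (continuous_const.prodMk continuous_id)
    exact cont_S.comp (continuous_const.prodMk h1)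
  have hRnslice : ∀ y ∈ Set.Icc (0:ℝ) 1,
      ContinuousOn (fun t => Rn σ τ α y t) (Set.Icc (0:ℝ) 1) := by
    intro y hy
    exact (cont_Rn hα hα1).comp
      (Continuous.continuousOn (continuous_const.prodMk continuous_id))
      (fun t ht => ⟨hy, ht⟩)
  have hSmem : ∀ y ∈ Set.Icc (0:ℝ) 1, ∀ t ∈ Set.Icc (0:ℝ) 1,
      S σ y (cc σ α y t) ∈ Set.Icc (0:ℝ) 1 :=
    fun y hy t ht => S_mem hσ hσ1 hy (cc_mem_Icc hσ hα hα1 hy ht)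
  have hbdd : ∀ (W : ℝ → ℝ), ContinuousOn W (Set.Icc (0:ℝ) 1) → ∀ y ∈ Set.Icc (0:ℝ) 1,
      BddAbove ((fun t => Rn σ τ α y t + γ * W (S σ y (cc σ α y t))) '' Set.Icc (0:ℝ) 1) := by
    intro W hW y hy
    apply IsCompact.bddAbove
    apply isCompact_Icc.image_of_continuousOn
    apply ContinuousOn.add (hRnslice y hy)
    apply ContinuousOn.mul continuousOn_const
    exact hW.comp (hinner y).continuousOn (fun t ht => hSmem y hy t ht)
  -- contraction estimate
  have hlip : ∀ f g : C(Set.Icc (0:ℝ) 1, ℝ), dist (Top f) (Top g) ≤ γ * dist f g := by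
    intro f g
    rw [ContinuousMap.dist_le (by positivity)]
    intro x
    show dist (T σ τ α γ (ext f) ↑x) (T σ τ α γ (ext g) ↑x) ≤ γ * dist f g
    rw [hTr (ext f) x x.2, hTr (ext g) x x.2, Real.dist_eq]
    apply abs_sSup_sub_sSup_le hne
      (hbdd (ext f) (hext_cont f).continuousOn x x.2)
      (hbdd (ext g) (hext_cont g).continuousOn x x.2)
    intro t ht
    have hS := hSmem x x.2 t ht
    have hd : |ext f (S σ ↑x (cc σ α ↑x t)) - ext g (S σ ↑x (cc σ α ↑x t))| ≤ dist f g := by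
      rw [hext_eq f _ hS, hext_eq g _ hS, ← Real.dist_eq]
      exact ContinuousMap.dist_apply_le_dist _
    have e : Rn σ τ α ↑x t + γ * ext f (S σ ↑x (cc σ α ↑x t)) -
        (Rn σ τ α ↑x t + γ * ext g (S σ ↑x (cc σ α ↑x t))) =
        γ * (ext f (S σ ↑x (cc σ α ↑x t)) - ext g (S σ ↑x (cc σ α ↑x t))) := by ring
    rw [e, abs_mul, abs_of_pos hγ]
    exact mul_le_mul_of_nonneg_left hd hγ.le
  have hcontr : ContractingWith ⟨γ, hγ.le⟩ Top := by
    constructor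
    · exact_mod_cast hγ1
    · exact LipschitzWith.of_dist_le_mul hlip
  have : Nonempty C(Set.Icc (0:ℝ) 1, ℝ) := ⟨ContinuousMap.const _ 0⟩
  let g0 : C(Set.Icc (0:ℝ) 1, ℝ) := ContractingWith.fixedPoint Top hcontr
  have hgfix : Top g0 = g0 := hcontr.fixedPoint_isFixedPt
  have hVfix : ∀ φ0 ∈ Set.Icc (0:ℝ) 1, ext g0 φ0 = T σ τ α γ (ext g0) φ0 := by
    intro φ0 hφ0
    calc ext g0 φ0 = g0 ⟨φ0, hφ0⟩ := hext_eq g0 φ0 hφ0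
    _ = (Top g0) ⟨φ0, hφ0⟩ := by rw [hgfix]
    _ = T σ τ α γ (ext g0) φ0 := rfl
  refine ⟨ext g0, ⟨(hext_cont g0).continuousOn, hVfix⟩, ?_⟩
  rintro W ⟨hWc, hWfix⟩ x hx
  obtain ⟨x0, hx0, hmax⟩ := isCompact_Icc.exists_isMaxOn hne
    ((hWc.sub (hext_cont g0).continuousOn).abs)
  set M := |W x0 - ext g0 x0| with hM
  have hM0 : 0 ≤ M := abs_nonneg _
  have hkey : ∀ y ∈ Set.Icc (0:ℝ) 1, |W y - ext g0 y| ≤ γ * M := by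
    intro y hy
    rw [hWfix y hy, hVfix y hy, hTr W y hy, hTr (ext g0) y hy]
    apply abs_sSup_sub_sSup_le hne (hbdd W hWc y hy)
      (hbdd (ext g0) (hext_cont g0).continuousOn y hy)
    intro t ht
    have hS := hSmem y hy t ht
    have hb : |W (S σ y (cc σ α y t)) - ext g0 (S σ y (cc σ α y t))| ≤ M :=
      (isMaxOn_iff.mp hmax) _ hS
    have e : Rn σ τ α y t + γ * W (S σ y (cc σ α y t)) -
        (Rn σ τ α y t + γ * ext g0 (S σ y (cc σ α y t))) =
        γ * (W (S σ y (cc σ α y t)) - ext g0 (S σ y (cc σ α y t))) := by ring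
    rw [e, abs_mul, abs_of_pos hγ]
    exact mul_le_mul_of_nonneg_left hb hγ.le
  have hMle : M ≤ γ * M := hkey x0 hx0
  have hMzero : M ≤ 0 := by nlinarith
  have habs : |W x - ext g0 x| ≤ 0 := le_trans (hkey x hx) (by nlinarith)
  have h0 : |W x - ext g0 x| = 0 := le_antisymm habs (abs_nonneg _)
  have := abs_eq_zero.mp h0
  linarith
end

section
/- Let V : [0,1] → ℝ be a continuous Bellman fixed point, i.e., V(φ0) = sup_{θ0 ∈ Θ(φ0)} [R(φ0,θ0) + γ·V(S(φ0,θ0))] for all φ0 ∈ [0,1]. Then V is monotonically decreasing: for all x, y ∈ [0,1] with x ≤ y, V(y) ≤ V(x). -/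
-- Θ antitone
lemma Θ_antitone {σ α x y θ : ℝ} (hσ : 0 < σ) (hx : 0 ≤ x) (hxy : x ≤ y)
    (hθ : θ ∈ Θ σ α y) : θ ∈ Θ σ α x := by
  obtain ⟨⟨h0, h1⟩, h2, h3⟩ := hθ
  have hds : θ / σ ≤ 1 := div_le_one_of_le₀ h1 hσ.le
  have hd0 : 0 ≤ θ / σ := div_nonneg h0 hσ.le
  refine ⟨⟨h0, h1⟩, ?_, ?_⟩
  · nlinarith
  · nlinarith

lemma Θ_nonempty {σ α φ : ℝ} (hσ : 0 < σ) (hα : 0 < α) (hα1 : α < 1) (hφ0 : 0 ≤ φ)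
    (hφ1 : φ ≤ 1) : (Θ σ α φ).Nonempty := by
  rcases le_or_gt φ α with h | h
  · refine ⟨0, ⟨le_refl 0, hσ.le⟩, by simpa using h, ?_⟩
    simp only [zero_div, sub_zero, mul_one, ge_iff_le]
    linarith
  · have hφpos : (0:ℝ) < φ := by linarith
    have ht : σ * (φ - α) / φ / σ = (φ - α) / φ := by
      field_simp
    have h2 : φ * (1 - (φ - α) / φ) = α := by field_simp; ring
    refine ⟨σ * (φ - α) / φ, ⟨?_, ?_⟩, ?_, ?_⟩
    · exact div_nonneg (mul_nonneg hσ.le (by linarith)) hφpos.le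
    · rw [div_le_iff₀ hφpos]; nlinarith
    · rw [ht, h2]
    · rw [ht, h2]; linarith

lemma Θ_bounds {σ α φ θ : ℝ} (hσ : 0 < σ) (hθ : θ ∈ Θ σ α φ) :
    σ * (φ - α) ≤ φ * θ ∧ φ * θ ≤ σ * (1 - α) := by
  obtain ⟨⟨h0, h1⟩, h2, h3⟩ := hθ
  have e1 : φ * (1 - θ / σ) * σ = φ * σ - φ * θ := by field_simp
  constructor
  · nlinarith [mul_le_mul_of_nonneg_right h2 hσ.le]
  · nlinarith [mul_le_mul_of_nonneg_right h3 hσ.le]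

-- S lemmas
lemma S_nonneg {σ φ θ : ℝ} (hσ : 0 < σ) (hσ1 : σ ≤ 1) (hφ : 0 ≤ φ) (hθ : 0 ≤ θ) :
    0 ≤ S σ φ θ := by
  have : S σ φ θ = φ * (2 * σ - σ ^ 2 + θ ^ 2) / (2 * σ) := by
    unfold S; field_simp; ring
  rw [this]
  apply div_nonneg _ (by linarith)
  exact mul_nonneg hφ (by nlinarith [mul_pos hσ (show (0:ℝ) < 2 - σ by linarith)])

lemma S_le {σ φ θ : ℝ} (hσ : 0 < σ) (hφ : 0 ≤ φ) (hθ0 : 0 ≤ θ) (hθ1 : θ ≤ σ) :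
    S σ φ θ ≤ φ := by
  unfold S
  have : 0 ≤ (φ / (2 * σ)) * (σ ^ 2 - θ ^ 2) := by
    apply mul_nonneg (by positivity); nlinarith
  linarith

lemma S_mono {σ x y θ : ℝ} (hσ : 0 < σ) (hσ1 : σ ≤ 1) (hx : 0 ≤ x) (hxy : x ≤ y) :
    S σ x θ ≤ S σ y θ := by
  have h : S σ y θ - S σ x θ = (y - x) * (2 * σ - σ ^ 2 + θ ^ 2) / (2 * σ) := by
    unfold S; field_simp; ring
  nlinarith [sq_nonneg θ, div_nonneg (mul_nonneg (sub_nonneg.2 hxy)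
    (by nlinarith : (0:ℝ) ≤ 2 * σ - σ ^ 2 + θ ^ 2)) (by linarith : (0:ℝ) ≤ 2 * σ)]

-- R upper bound
lemma R_le {σ τ α φ θ : ℝ} (hσ : 0 < σ) (hφ0 : 0 ≤ φ) (hφ1 : φ ≤ 1)
    (hθ0 : 0 ≤ θ) (hθ1 : θ ≤ σ) :
    R σ τ α φ θ ≤ (σ ^ 2 + (σ + τ) ^ 2) / (2 * σ) := by
  unfold R
  split_ifs with h
  · have key : (φ / (2 * σ)) * (σ ^ 2 - θ ^ 2)
        + ((1 - φ) / (2 * σ)) * ((σ + τ) ^ 2 - (θ1 σ τ α φ θ) ^ 2)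
        = (φ * (σ ^ 2 - θ ^ 2) + (1 - φ) * ((σ + τ) ^ 2 - (θ1 σ τ α φ θ) ^ 2)) / (2 * σ) := by
      ring
    rw [key, div_le_div_iff_of_pos_right (show (0:ℝ) < 2 * σ by linarith)]
    nlinarith [sq_nonneg θ,
      mul_nonneg (show (0:ℝ) ≤ 1 - φ by linarith) (show (0:ℝ) ≤ σ ^ 2 - θ ^ 2 by nlinarith),
      mul_nonneg (show (0:ℝ) ≤ 1 - φ by linarith) (sq_nonneg (θ1 σ τ α φ θ)),
      mul_nonneg hφ0 (sq_nonneg (σ + τ)), mul_nonneg hφ0 (sq_nonneg θ)]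
  · have e : 1 / (2 * σ) * (σ ^ 2 - θ ^ 2) = (σ ^ 2 - θ ^ 2) / (2 * σ) := by ring
    rw [e, div_le_div_iff_of_pos_right (show (0:ℝ) < 2 * σ by linarith)]
    nlinarith [sq_nonneg θ, sq_nonneg (σ + τ)]

-- R monotone in φ
lemma R_mono {σ τ α x y θ : ℝ} (hσ : 0 < σ) (hτ : 0 < τ) (hα : 0 < α) (hα1 : α < 1)
    (hx : 0 ≤ x) (hxy : x ≤ y) (hy : y ≤ 1) (hθ : θ ∈ Θ σ α y) :
    R σ τ α y θ ≤ R σ τ α x θ := by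
  obtain ⟨⟨h0, h1⟩, h2, h3⟩ := hθ
  rcases lt_or_ge y 1 with hy1 | hy1
  · have hx1 : x < 1 := lt_of_le_of_lt hxy hy1
    have key : R σ τ α x θ - R σ τ α y θ
        = (y - x) * ((σ * (1 - α) - θ) ^ 2 + 2 * τ * (σ - θ) * (1 - x) * (1 - y))
          / (2 * σ * (1 - x) * (1 - y)) := by
      have hx0 : (1:ℝ) - x ≠ 0 := by linarith
      have hy0 : (1:ℝ) - y ≠ 0 := by linarith
      simp only [R, θ1, if_pos hx1, if_pos hy1]
      field_simp
      ring
    have hnum : 0 ≤ (y - x) * ((σ * (1 - α) - θ) ^ 2 + 2 * τ * (σ - θ) * (1 - x) * (1 - y)) := by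
      apply mul_nonneg (by linarith)
      have : 0 ≤ 2 * τ * (σ - θ) * (1 - x) * (1 - y) := by
        apply mul_nonneg; apply mul_nonneg; apply mul_nonneg
        all_goals nlinarith
      nlinarith [sq_nonneg (σ * (1 - α) - θ)]
    have hden : 0 < 2 * σ * (1 - x) * (1 - y) :=
      mul_pos (mul_pos (by linarith) (by linarith)) (by linarith)
    nlinarith [div_nonneg hnum hden.le]
  · have hy' : y = 1 := le_antisymm hy hy1
    subst hy'
    -- θ is forced to σ*(1-α)
    have hθval : θ = σ * (1 - α) := by
      have e1 : (1:ℝ) * (1 - θ / σ) * σ = σ - θ := by field_simp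
      nlinarith [mul_le_mul_of_nonneg_right h2 hσ.le, mul_le_mul_of_nonneg_right h3 hσ.le]
    rcases lt_or_ge x 1 with hx1 | hx1
    · have key : R σ τ α x θ - R σ τ α 1 θ = (1 - x) * τ * α := by
        subst hθval
        have hx0 : (1:ℝ) - x ≠ 0 := by linarith
        simp only [R, θ1, if_pos hx1, if_neg (lt_irrefl (1:ℝ))]
        field_simp
        ring
      nlinarith [mul_nonneg (mul_nonneg (by linarith : (0:ℝ) ≤ 1 - x) hτ.le) hα.le]
    · have : x = 1 := le_antisymm hxy hx1
      rw [this]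

/-- Any continuous Bellman fixed point is monotonically decreasing on [0,1]. -/
theorem bellman_fixed_point_decreasing (σ τ α γ : ℝ) (hσ : 0 < σ) (hτ : 0 < τ)
    (hστ : σ + τ ≤ 1) (hα : 0 < α) (hα1 : α < 1) (hγ : 0 < γ) (hγ1 : γ < 1)
    (V : ℝ → ℝ) (hVc : ContinuousOn V (Set.Icc (0 : ℝ) 1))
    (hVfix : ∀ φ0 ∈ Set.Icc (0 : ℝ) 1, V φ0 = T σ τ α γ V φ0) :
    ∀ x ∈ Set.Icc (0 : ℝ) 1, ∀ y ∈ Set.Icc (0 : ℝ) 1, x ≤ y → V y ≤ V x := by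
  have hσ1 : σ ≤ 1 := by linarith
  obtain ⟨M₀, hM₀⟩ := isCompact_Icc.exists_bound_of_continuousOn hVc
  set M := max M₀ 0 with hMdef
  have hM : ∀ s ∈ Set.Icc (0:ℝ) 1, |V s| ≤ M := fun s hs => by
    have := hM₀ s hs
    rw [Real.norm_eq_abs] at this
    exact this.trans (le_max_left _ _)
  have hM0 : 0 ≤ M := le_max_right _ _
  -- S is in [0,1]
  have hSmem : ∀ φ ∈ Set.Icc (0:ℝ) 1, ∀ θ ∈ Θ σ α φ, S σ φ θ ∈ Set.Icc (0:ℝ) 1 := by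
    rintro φ ⟨hφ0, hφ1⟩ θ ⟨⟨h0, h1⟩, -⟩
    exact ⟨S_nonneg hσ hσ1 hφ0 h0, (S_le hσ hφ0 h0 h1).trans hφ1⟩
  -- bddAbove
  have hbdd : ∀ φ ∈ Set.Icc (0:ℝ) 1,
      BddAbove ((fun θ => R σ τ α φ θ + γ * V (S σ φ θ)) '' Θ σ α φ) := by
    intro φ hφ
    refine ⟨(σ ^ 2 + (σ + τ) ^ 2) / (2 * σ) + γ * M, ?_⟩
    rintro _ ⟨θ, hθ, rfl⟩
    have h0 := hθ.1.1
    have h1 := hθ.1.2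
    have hR := R_le (τ := τ) (α := α) hσ hφ.1 hφ.2 h0 h1
    have hV := hM _ (hSmem φ hφ θ hθ)
    have : V (S σ φ θ) ≤ M := (abs_le.1 hV).2
    nlinarith
  -- induction claim
  have main : ∀ n : ℕ, ∀ x ∈ Set.Icc (0:ℝ) 1, ∀ y ∈ Set.Icc (0:ℝ) 1, x ≤ y →
      V y ≤ V x + 2 * M * γ ^ n := by
    intro n
    induction n with
    | zero =>
      intro x hx y hy _
      have h1 := (abs_le.1 (hM y hy)).2
      have h2 := (abs_le.1 (hM x hx)).1
      simp only [pow_zero]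
      linarith
    | succ n ih =>
      intro x hx y hy hxy
      rw [hVfix y hy]
      apply csSup_le
      · exact (Θ_nonempty hσ hα hα1 hy.1 hy.2).image _
      rintro _ ⟨θ, hθy, rfl⟩
      have hθx : θ ∈ Θ σ α x := Θ_antitone hσ hx.1 hxy hθy
      have hR : R σ τ α y θ ≤ R σ τ α x θ := R_mono hσ hτ hα hα1 hx.1 hxy hy.2 hθy
      have hSx := hSmem x hx θ hθx
      have hSy := hSmem y hy θ hθy
      have hSle : S σ x θ ≤ S σ y θ := S_mono hσ hσ1 hx.1 hxy
      have h2 : V (S σ y θ) ≤ V (S σ x θ) + 2 * M * γ ^ n := ih _ hSx _ hSy hSle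
      have h3 : R σ τ α x θ + γ * V (S σ x θ) ≤ V x := by
        rw [hVfix x hx]
        exact le_csSup (hbdd x hx) ⟨θ, hθx, rfl⟩
      have h4 : γ * V (S σ y θ) ≤ γ * (V (S σ x θ) + 2 * M * γ ^ n) :=
        mul_le_mul_of_nonneg_left h2 hγ.le
      show R σ τ α y θ + γ * V (S σ y θ) ≤ V x + 2 * M * γ ^ (n + 1)
      have hpow : γ ^ (n + 1) = γ * γ ^ n := by ring
      rw [hpow]
      nlinarith
  intro x hx y hy hxy
  have hlim : Filter.Tendsto (fun n : ℕ => V x + 2 * M * γ ^ n) Filter.atTop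
      (nhds (V x)) := by
    have h1 : Filter.Tendsto (fun n : ℕ => γ ^ n) Filter.atTop (nhds 0) :=
      tendsto_pow_atTop_nhds_zero_of_lt_one hγ.le hγ1
    have := (h1.const_mul (2 * M)).const_add (V x)
    simpa using this
  exact ge_of_tendsto' hlim (fun n => main n x hx y hy hxy)
end

section
/- Let V : [0,1] → ℝ be a continuous Bellman fixed point. Then for every state φ0 ∈ [0,1] with φ0 < φ0*, the threshold σ is optimal at φ0: σ ∈ Θ(φ0) and V(φ0) = R(φ0,σ) + γ·V(S(φ0,σ)); equivalently (since S(φ0,σ) = φ0), V(φ0) = R(φ0,σ)/(1−γ) = (α/(1−γ))·((σ+τ) − σα/(2(1−φ0))). -/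
noncomputable def gfun (σ τ α : ℝ) (φ : ℝ) : ℝ := α * (σ + τ) - σ * α ^ 2 / (2 * (1 - φ))

lemma aux_E1 (σ τ α φ θ : ℝ) (hσne : σ ≠ 0) (hxne : (1 - φ) ≠ 0) (hφ1 : φ < 1) :
    R σ τ α φ θ = gfun σ τ α φ - (φ * (σ - θ)) * (σ - θ) / (2 * σ)
      + ((φ * (σ - θ)) / σ) * (σ * α / (1 - φ) - τ)
      - (φ * (σ - θ)) ^ 2 / (2 * σ * (1 - φ)) := by
  unfold R θ1 gfun
  rw [if_pos hφ1]
  field_simp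
  ring

lemma aux_E2 (σ τ α φ θ : ℝ) (hxne : (1 - φ) ≠ 0) (hS1ne : (1 - S σ φ θ) ≠ 0) :
    gfun σ τ α (S σ φ θ) = gfun σ τ α φ
      + (σ * α ^ 2 / 2) * ((φ - S σ φ θ) / ((1 - φ) * (1 - S σ φ θ))) := by
  unfold gfun; field_simp; ring

lemma aux_Sle (σ φ θ : ℝ) (hσ : 0 < σ) (hφ0' : 0 ≤ φ) (hθ0 : 0 ≤ θ) (hθσ : θ ≤ σ) :
    S σ φ θ ≤ φ := by
  have hint : (0:ℝ) ≤ (φ / (2 * σ)) * (σ ^ 2 - θ ^ 2) :=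
    mul_nonneg (div_nonneg hφ0' (by linarith)) (by nlinarith)
  unfold S; linarith

lemma aux_keyx (σ τ α γ φ φ0 : ℝ) (hτ : 0 < τ) (hσ : 0 < σ) (hα : 0 < α) (hγ1 : γ < 1)
    (hφle : φ ≤ φ0)
    (key0 : γ * σ ^ 2 * α ^ 2 / 2 ≤ (1 - γ) * (τ * (1 - φ0) ^ 2 - σ * α * (1 - φ0)))
    (hτ0 : σ * α ≤ τ * (1 - φ0)) :
    (1 - γ) * (σ * α * (1 - φ) - τ * (1 - φ) ^ 2) + γ * σ ^ 2 * α ^ 2 / 2 ≤ 0 := by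
  nlinarith [mul_nonneg (mul_nonneg (by linarith : (0:ℝ) ≤ 1 - γ)
      (by linarith : (0:ℝ) ≤ (1 - φ) - (1 - φ0)))
    (by nlinarith [mul_nonneg hτ.le (by linarith : (0:ℝ) ≤ (1 - φ) - (1 - φ0)),
      mul_pos hσ hα] : (0:ℝ) ≤ τ * ((1 - φ) + (1 - φ0)) - σ * α), key0]

lemma aux_hB (σ φ θ : ℝ) (hσ : 0 < σ) (hφ0' : 0 ≤ φ) (hθ0 : 0 ≤ θ) (hθσ : θ ≤ σ)
    (hx : 0 < 1 - φ) (hS1 : 0 < 1 - S σ φ θ) (hSle : S σ φ θ ≤ φ) :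
    (φ - S σ φ θ) / ((1 - φ) * (1 - S σ φ θ)) ≤ (φ * (σ - θ)) / (1 - φ) ^ 2 := by
  have hu : 0 ≤ φ * (σ - θ) := mul_nonneg hφ0' (by linarith)
  have hdiff : φ - S σ φ θ = (φ * (σ - θ)) * (σ + θ) / (2 * σ) := by
    unfold S; field_simp; ring
  have h1 : φ - S σ φ θ ≤ φ * (σ - θ) := by
    rw [hdiff, div_le_iff₀ (by linarith : (0:ℝ) < 2 * σ)]
    nlinarith [hu, hθσ, hσ]
  have h3 : 0 ≤ φ - S σ φ θ := by linarith
  rw [div_le_div_iff₀ (by positivity) (by positivity)]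
  nlinarith [mul_le_mul_of_nonneg_right h1 (sq_nonneg (1 - φ)),
    mul_le_mul_of_nonneg_left (by linarith : 1 - φ ≤ 1 - S σ φ θ)
      (mul_nonneg hu hx.le)]

lemma aux_hfin (σ τ α γ φ θ : ℝ) (hσ : 0 < σ) (hx : 0 < 1 - φ) (h1γ : 0 < 1 - γ)
    (hu : 0 ≤ φ * (σ - θ))
    (key_x : (1 - γ) * (σ * α * (1 - φ) - τ * (1 - φ) ^ 2) + γ * σ ^ 2 * α ^ 2 / 2 ≤ 0) :
    (1 - γ) * (((φ * (σ - θ)) / σ) * (σ * α / (1 - φ) - τ))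
      + γ * ((σ * α ^ 2 / 2) * ((φ * (σ - θ)) / (1 - φ) ^ 2)) ≤ 0 := by
  have heq : (1 - γ) * (((φ * (σ - θ)) / σ) * (σ * α / (1 - φ) - τ))
      + γ * ((σ * α ^ 2 / 2) * ((φ * (σ - θ)) / (1 - φ) ^ 2))
      = ((φ * (σ - θ)) / (σ * (1 - φ) ^ 2))
        * ((1 - γ) * (σ * α * (1 - φ) - τ * (1 - φ) ^ 2) + γ * σ ^ 2 * α ^ 2 / 2) := by
    have hσne : σ ≠ 0 := hσ.ne'
    have hxne : (1 - φ) ≠ 0 := hx.ne'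
    field_simp
  rw [heq]
  have hquot : 0 ≤ (φ * (σ - θ)) / (σ * (1 - φ) ^ 2) := div_nonneg hu (by positivity)
  nlinarith [mul_nonneg hquot (neg_nonneg.mpr key_x)]

lemma aux_glue (σ τ α γ φ θ Rv gS G Bf : ℝ)
    (hE1 : Rv = G - (φ * (σ - θ)) * (σ - θ) / (2 * σ)
      + ((φ * (σ - θ)) / σ) * (σ * α / (1 - φ) - τ)
      - (φ * (σ - θ)) ^ 2 / (2 * σ * (1 - φ)))
    (hE2 : gS = G + (σ * α ^ 2 / 2) * (Bf)) (hγ : 0 < γ) (h1γ : 0 < 1 - γ) (hσ : 0 < σ) (hx : 0 < 1 - φ)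
    (hu : 0 ≤ φ * (σ - θ)) (hθσ : θ ≤ σ)
    (hB : Bf ≤ (φ * (σ - θ)) / (1 - φ) ^ 2)
    (hfin : (1 - γ) * (((φ * (σ - θ)) / σ) * (σ * α / (1 - φ) - τ))
      + γ * ((σ * α ^ 2 / 2) * ((φ * (σ - θ)) / (1 - φ) ^ 2)) ≤ 0) :
    (1 - γ) * Rv + γ * gS ≤ G := by
  have hA2 : (1 - γ) * (- ((φ * (σ - θ)) * (σ - θ) / (2 * σ))
        + ((φ * (σ - θ)) / σ) * (σ * α / (1 - φ) - τ)
        - (φ * (σ - θ)) ^ 2 / (2 * σ * (1 - φ)))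
      ≤ (1 - γ) * (((φ * (σ - θ)) / σ) * (σ * α / (1 - φ) - τ)) := by
    apply mul_le_mul_of_nonneg_left _ h1γ.le
    have t1 : (0:ℝ) ≤ (φ * (σ - θ)) * (σ - θ) / (2 * σ) :=
      div_nonneg (mul_nonneg hu (by linarith)) (by linarith)
    have t2 : (0:ℝ) ≤ (φ * (σ - θ)) ^ 2 / (2 * σ * (1 - φ)) := by positivity
    linarith
  have hB2 : γ * ((σ * α ^ 2 / 2) * Bf)
      ≤ γ * ((σ * α ^ 2 / 2) * ((φ * (σ - θ)) / (1 - φ) ^ 2)) := by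
    apply mul_le_mul_of_nonneg_left _ hγ.le
    exact mul_le_mul_of_nonneg_left hB (by positivity)
  rw [hE1, hE2]
  nlinarith [hA2, hB2, hfin]

lemma super (σ τ α γ φ0 : ℝ) (hσ : 0 < σ) (hτ : 0 < τ) (hα : 0 < α)
    (hγ : 0 < γ) (hγ1 : γ < 1) (hφ01 : φ0 < 1)
    (key0 : γ * σ ^ 2 * α ^ 2 / 2 ≤ (1 - γ) * (τ * (1 - φ0) ^ 2 - σ * α * (1 - φ0)))
    (hτ0 : σ * α ≤ τ * (1 - φ0))
    (φ : ℝ) (hφ : φ ∈ Set.Icc 0 φ0) (θ : ℝ) (hθ : θ ∈ Θ σ α φ) :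
    R σ τ α φ θ + γ * (gfun σ τ α (S σ φ θ) / (1 - γ)) ≤ gfun σ τ α φ / (1 - γ) := by
  obtain ⟨hφ0', hφle⟩ := hφ
  obtain ⟨⟨hθ0, hθσ⟩, -, -⟩ := hθ
  have hφ1 : φ < 1 := lt_of_le_of_lt hφle hφ01
  have hx : 0 < 1 - φ := by linarith
  have h1γ : 0 < 1 - γ := by linarith
  have hu : 0 ≤ φ * (σ - θ) := mul_nonneg hφ0' (by linarith)
  have hSle : S σ φ θ ≤ φ := aux_Sle σ φ θ hσ hφ0' hθ0 hθσ
  have hS1 : 0 < 1 - S σ φ θ := by linarith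
  have hmain : (1 - γ) * R σ τ α φ θ + γ * gfun σ τ α (S σ φ θ) ≤ gfun σ τ α φ :=
    aux_glue σ τ α γ φ θ _ _ _ _
      (aux_E1 σ τ α φ θ hσ.ne' hx.ne' hφ1)
      (aux_E2 σ τ α φ θ hx.ne' hS1.ne') hγ h1γ hσ hx hu hθσ
      (aux_hB σ φ θ hσ hφ0' hθ0 hθσ hx hS1 hSle)
      (aux_hfin σ τ α γ φ θ hσ hx h1γ hu
        (aux_keyx σ τ α γ φ φ0 hτ hσ hα hγ1 hφle key0 hτ0))
  have hform : R σ τ α φ θ + γ * (gfun σ τ α (S σ φ θ) / (1 - γ))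
      = ((1 - γ) * R σ τ α φ θ + γ * gfun σ τ α (S σ φ θ)) / (1 - γ) := by
    field_simp
  rw [hform]
  exact div_le_div_of_nonneg_right hmain h1γ.le


lemma tipping_arith (σ τ α γ φ0 : ℝ) (hσ : 0 < σ) (hτ : 0 < τ) (hα : 0 < α)
    (hγ : 0 < γ) (hγ1 : γ < 1)
    (hc : φ0 < 1 - (α * σ / (2 * τ)) * (1 + Real.sqrt (1 + 2 * τ * γ / (1 - γ)))) :
    γ * σ ^ 2 * α ^ 2 / 2 ≤ (1 - γ) * (τ * (1 - φ0) ^ 2 - σ * α * (1 - φ0)) ∧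
    σ * α ≤ τ * (1 - φ0) := by
  have h1γ : 0 < 1 - γ := by linarith
  set s := Real.sqrt (1 + 2 * τ * γ / (1 - γ)) with hs_def
  have harg : (0:ℝ) ≤ 1 + 2 * τ * γ / (1 - γ) := by positivity
  have hs1 : 1 ≤ s := by
    rw [hs_def]
    have hq : (0:ℝ) ≤ 2 * τ * γ / (1 - γ) := by positivity
    calc (1:ℝ) = Real.sqrt 1 := (Real.sqrt_one).symm
      _ ≤ s := Real.sqrt_le_sqrt (by linarith)
  have hs2 : s ^ 2 = 1 + 2 * τ * γ / (1 - γ) := Real.sq_sqrt harg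
  have hs3 : α ^ 2 * σ ^ 2 * ((1 - γ) * s ^ 2) = α ^ 2 * σ ^ 2 * ((1 - γ) + 2 * τ * γ) := by
    rw [hs2]; field_simp
  have hc' : (α * σ / (2 * τ)) * (1 + s) < 1 - φ0 := by linarith
  have hc'' : α * σ * (1 + s) / (2 * τ) < 1 - φ0 := by
    rw [div_mul_eq_mul_div] at hc'; exact hc'
  have hy : α * σ * (1 + s) < (1 - φ0) * (2 * τ) := (div_lt_iff₀ (by linarith)).mp hc''
  have hασ : 0 < α * σ := mul_pos hα hσ
  constructor
  · have hfac : 0 ≤ ((1 - φ0) * (2 * τ) - α * σ * (1 + s))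
        * ((1 - φ0) * (2 * τ) - α * σ * (1 - s)) := by
      apply mul_nonneg (by linarith)
      nlinarith [mul_nonneg hασ.le (by linarith : (0:ℝ) ≤ s)]
    have hclean : 2 * τ * γ * α ^ 2 * σ ^ 2
        ≤ (1 - γ) * (4 * τ ^ 2 * (1 - φ0) ^ 2 - 4 * τ * α * σ * (1 - φ0)) := by
      nlinarith [mul_nonneg h1γ.le hfac, hs3]
    nlinarith [hclean, hτ]
  · nlinarith [hy, mul_nonneg hασ.le (by linarith : (0:ℝ) ≤ s - 1)]

lemma sigma_mem_Theta (σ α φ : ℝ) (hσ : 0 < σ) (hα : 0 < α) (hφ1 : φ ≤ 1 - α) :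
    σ ∈ Θ σ α φ := by
  have h : σ / σ = 1 := div_self hσ.ne'
  refine ⟨⟨hσ.le, le_refl σ⟩, ?_, ?_⟩
  · rw [h]; norm_num; linarith
  · rw [h]; norm_num; linarith

lemma S_lb (σ φ θ : ℝ) (hσ : 0 < σ) (hσ1 : σ ≤ 1) (hφ : 0 ≤ φ)
    (hθ0 : 0 ≤ θ) (hθσ : θ ≤ σ) : 0 ≤ S σ φ θ := by
  have h : S σ φ θ = φ * (2 * σ - σ ^ 2 + θ ^ 2) / (2 * σ) := by
    unfold S; field_simp; ring
  rw [h]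
  apply div_nonneg (mul_nonneg hφ ?_) (by linarith)
  nlinarith [mul_nonneg hσ.le (by linarith : (0:ℝ) ≤ 1 - σ), sq_nonneg θ]


/-- Below the tipping point φ0*, the threshold σ is optimal and the value takes
the closed form (α/(1−γ))((σ+τ) − σα/(2(1−φ0))). -/
theorem sigma_optimal_below_tipping_point (σ τ α γ : ℝ) (hσ : 0 < σ)
    (hτ : 0 < τ) (hστ : σ + τ ≤ 1) (hα : 0 < α) (hα1 : α < 1)
    (hγ : 0 < γ) (hγ1 : γ < 1)
    (V : ℝ → ℝ) (hVc : ContinuousOn V (Set.Icc (0 : ℝ) 1))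
    (hVfix : ∀ φ0 ∈ Set.Icc (0 : ℝ) 1, V φ0 = T σ τ α γ V φ0)
    (φ0 : ℝ) (hφ0 : 0 ≤ φ0) (hφ0lt : φ0 < φstar σ τ α γ) :
    σ ∈ Θ σ α φ0 ∧
    V φ0 = R σ τ α φ0 σ + γ * V (S σ φ0 σ) ∧
    V φ0 = R σ τ α φ0 σ / (1 - γ) ∧
    V φ0 = (α / (1 - γ)) * ((σ + τ) - σ * α / (2 * (1 - φ0))) := by
  have h1γ : 0 < 1 - γ := by linarith
  have hσ1 : σ ≤ 1 := by linarith
  have hmax : φ0 < max 0 (min (1 - α)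
      (1 - (α * σ / (2 * τ)) * (1 + Real.sqrt (1 + 2 * τ * γ / (1 - γ))))) := hφ0lt
  have hmin : φ0 < min (1 - α)
      (1 - (α * σ / (2 * τ)) * (1 + Real.sqrt (1 + 2 * τ * γ / (1 - γ)))) := by
    rcases lt_max_iff.mp hmax with h | h
    · linarith
    · exact h
  have hφα : φ0 < 1 - α := lt_of_lt_of_le hmin (min_le_left _ _)
  have hc : φ0 < 1 - (α * σ / (2 * τ)) * (1 + Real.sqrt (1 + 2 * τ * γ / (1 - γ))) :=
    lt_of_lt_of_le hmin (min_le_right _ _)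
  have hφ01 : φ0 < 1 := by linarith
  obtain ⟨key0, hτ0⟩ := tipping_arith σ τ α γ φ0 hσ hτ hα hγ hγ1 hc
  have hDsub : Set.Icc (0:ℝ) φ0 ⊆ Set.Icc (0:ℝ) 1 := Set.Icc_subset_Icc le_rfl (by linarith)
  have hDne : (Set.Icc (0:ℝ) φ0).Nonempty := Set.nonempty_Icc.mpr hφ0
  have hSmem : ∀ φ ∈ Set.Icc (0:ℝ) φ0, ∀ θ ∈ Θ σ α φ, S σ φ θ ∈ Set.Icc (0:ℝ) φ0 := by
    intro φ hφ θ hθ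
    obtain ⟨⟨h0, h1⟩, -, -⟩ := hθ
    exact ⟨S_lb σ φ θ hσ hσ1 hφ.1 h0 h1, le_trans (aux_Sle σ φ θ hσ hφ.1 h0 h1) hφ.2⟩
  have hgc : ContinuousOn (fun z => gfun σ τ α z / (1 - γ)) (Set.Icc (0:ℝ) φ0) := by
    apply ContinuousOn.div_const
    unfold gfun
    apply ContinuousOn.sub continuousOn_const
    apply ContinuousOn.div continuousOn_const
    · fun_prop
    · intro z hz
      have hz2 : z ≤ φ0 := hz.2
      have : (0:ℝ) < 2 * (1 - z) := by linarith
      exact this.ne'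
  have hVle : ∀ z ∈ Set.Icc (0:ℝ) φ0, V z ≤ gfun σ τ α z / (1 - γ) := by
    have hcont : ContinuousOn (fun z => V z - gfun σ τ α z / (1 - γ)) (Set.Icc 0 φ0) :=
      (hVc.mono hDsub).sub hgc
    obtain ⟨ψ, hψD, hψmax⟩ := isCompact_Icc.exists_isMaxOn hDne hcont
    have key : V ψ - gfun σ τ α ψ / (1 - γ) ≤ γ * (V ψ - gfun σ τ α ψ / (1 - γ)) := by
      have hfix := hVfix ψ (hDsub hψD)
      have hub : T σ τ α γ V ψ ≤ gfun σ τ α ψ / (1 - γ)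
          + γ * (V ψ - gfun σ τ α ψ / (1 - γ)) := by
        apply csSup_le
        · exact ⟨_, Set.mem_image_of_mem _
            (sigma_mem_Theta σ α ψ hσ hα (by linarith [hψD.2]))⟩
        · rintro y ⟨θ, hθ, rfl⟩
          have hS' : S σ ψ θ ∈ Set.Icc (0:ℝ) φ0 := hSmem ψ hψD θ hθ
          have hmx := hψmax hS'
          simp only [Set.mem_setOf_eq] at hmx
          have h2 := super σ τ α γ φ0 hσ hτ hα hγ hγ1 hφ01 key0 hτ0 ψ hψD θ hθ
          have h3 : γ * V (S σ ψ θ) ≤ γ * (gfun σ τ α (S σ ψ θ) / (1 - γ)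
              + (V ψ - gfun σ τ α ψ / (1 - γ))) :=
            mul_le_mul_of_nonneg_left (by linarith) hγ.le
          have h4 : γ * (gfun σ τ α (S σ ψ θ) / (1 - γ)
              + (V ψ - gfun σ τ α ψ / (1 - γ)))
              = γ * (gfun σ τ α (S σ ψ θ) / (1 - γ))
                + γ * (V ψ - gfun σ τ α ψ / (1 - γ)) := by ring
          rw [h4] at h3
          linarith
      have hVψ : V ψ ≤ gfun σ τ α ψ / (1 - γ)
          + γ * (V ψ - gfun σ τ α ψ / (1 - γ)) := by rw [← hfix] at hub; exact hub
      linarith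
    have hM0 : V ψ - gfun σ τ α ψ / (1 - γ) ≤ 0 := by nlinarith [key]
    intro z hz
    have hmx := hψmax hz
    simp only [Set.mem_setOf_eq] at hmx
    linarith
  have hφ0D : φ0 ∈ Set.Icc (0:ℝ) φ0 := ⟨hφ0, le_refl _⟩
  have hσΘ : σ ∈ Θ σ α φ0 := sigma_mem_Theta σ α φ0 hσ hα (by linarith)
  have hSσ : S σ φ0 σ = φ0 := by unfold S; ring
  have hxne : (1:ℝ) - φ0 ≠ 0 := by intro h; linarith [h]
  have hRg : R σ τ α φ0 σ = gfun σ τ α φ0 := by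
    unfold R θ1 gfun
    rw [if_pos hφ01]
    field_simp
    ring
  have hbdd : BddAbove ((fun θ0 => R σ τ α φ0 θ0 + γ * V (S σ φ0 θ0)) '' Θ σ α φ0) := by
    refine ⟨gfun σ τ α φ0 / (1 - γ), ?_⟩
    rintro y ⟨θ, hθ, rfl⟩
    have hS' := hSmem φ0 hφ0D θ hθ
    have h1 := hVle _ hS'
    have h2 := super σ τ α γ φ0 hσ hτ hα hγ hγ1 hφ01 key0 hτ0 φ0 hφ0D θ hθ
    have h3 : γ * V (S σ φ0 θ) ≤ γ * (gfun σ τ α (S σ φ0 θ) / (1 - γ)) :=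
      mul_le_mul_of_nonneg_left h1 hγ.le
    show R σ τ α φ0 θ + γ * V (S σ φ0 θ) ≤ gfun σ τ α φ0 / (1 - γ)
    linarith
  have hge : R σ τ α φ0 σ + γ * V (S σ φ0 σ) ≤ V φ0 := by
    rw [hVfix φ0 (hDsub hφ0D)]
    exact le_csSup hbdd (Set.mem_image_of_mem _ hσΘ)
  rw [hSσ, hRg] at hge
  have hup := hVle φ0 hφ0D
  have hlow : gfun σ τ α φ0 / (1 - γ) ≤ V φ0 := by
    rw [div_le_iff₀ h1γ]
    nlinarith [hge]
  have hVeq : V φ0 = gfun σ τ α φ0 / (1 - γ) := le_antisymm hup hlow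
  refine ⟨hσΘ, ?_, ?_, ?_⟩
  · rw [hSσ, hVeq, hRg]
    field_simp
    ring
  · rw [hVeq, hRg]
  · rw [hVeq]
    unfold gfun
    field_simp
end

section
/- (Weak affirmative action.) Let V : [0,1] → ℝ be a continuous Bellman fixed point that is strictly decreasing on [0,1]. Then for every state φ0 with φ0* < φ0 < 1 and every θ0 ∈ Θ(φ0) attaining the supremum at φ0 (i.e., V(φ0) = R(φ0,θ0) + γ·V(S(φ0,θ0))), one has θ0 ≤ θ1(φ0,θ0). -/
set_option maxHeartbeats 1000000 in
/-- Weak affirmative action: beyond the tipping point, any optimal threshold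
for group D is at most the corresponding threshold for group A. -/
theorem weak_affirmative_action (σ τ α γ : ℝ) (hσ : 0 < σ) (hτ : 0 < τ)
    (hστ : σ + τ ≤ 1) (hα : 0 < α) (hα1 : α < 1) (hγ : 0 < γ) (hγ1 : γ < 1)
    (V : ℝ → ℝ) (hVc : ContinuousOn V (Set.Icc (0 : ℝ) 1))
    (hVfix : ∀ φ0 ∈ Set.Icc (0 : ℝ) 1, V φ0 = T σ τ α γ V φ0)
    (hVdec : StrictAntiOn V (Set.Icc (0 : ℝ) 1))
    (φ0 : ℝ) (hφ0gt : φstar σ τ α γ < φ0) (hφ0lt : φ0 < 1)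
    (θ0 : ℝ) (hθ0 : θ0 ∈ Θ σ α φ0)
    (hopt : V φ0 = R σ τ α φ0 θ0 + γ * V (S σ φ0 θ0)) :
    θ0 ≤ θ1 σ τ α φ0 θ0 := by
  by_contra hcon
  push_neg at hcon
  obtain ⟨⟨hθ0l, hθ0r⟩, hA, hB⟩ := hθ0
  have hφ0pos : 0 < φ0 := lt_of_le_of_lt (le_max_left _ _) hφ0gt
  have h1φ : 0 < 1 - φ0 := by linarith
  have h2σ : 0 < 2 * σ := by linarith
  set c : ℝ := σ * (1 - α) + (1 - φ0) * τ with hc_def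
  have hcpos : 0 < c := by
    nlinarith [mul_pos h1φ hτ, mul_pos hσ (by linarith : (0:ℝ) < 1 - α)]
  have hc : c < θ0 := by
    simp only [θ1] at hcon
    rw [div_lt_iff₀ h1φ] at hcon
    nlinarith
  have hslack : 0 < α * σ - φ0 * (σ - θ0) := by
    nlinarith [mul_nonneg h1φ.le (by linarith : (0:ℝ) ≤ σ - θ0), mul_pos h1φ hτ]
  set ε : ℝ := min (θ0 - c) (α * σ - φ0 * (σ - θ0)) with hε_def
  have hεpos : 0 < ε := lt_min (by linarith) hslack
  have hε1 : ε ≤ θ0 - c := min_le_left _ _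
  have hε2 : ε ≤ α * σ - φ0 * (σ - θ0) := min_le_right _ _
  set θ' : ℝ := θ0 - ε with hθ'_def
  have hθ'pos : 0 < θ' := by rw [hθ'_def]; linarith
  have hθ'lt : θ' < θ0 := by rw [hθ'_def]; linarith
  have hθ'le : θ' ≤ σ := by rw [hθ'_def]; linarith
  -- admissibility of θ'
  have hθ'A : φ0 * (1 - θ' / σ) ≤ α := by
    have hexp : φ0 * (1 - θ' / σ) = (φ0 * (σ - θ')) / σ := by
      field_simp
    rw [hexp, div_le_iff₀ hσ]
    have hφε : φ0 * ε ≤ ε := by nlinarith [mul_nonneg h1φ.le hεpos.le]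
    rw [hθ'_def]
    nlinarith
  have hθ'B : φ0 * (1 - θ' / σ) + (1 - φ0) ≥ α := by
    have hd : θ' / σ ≤ θ0 / σ := by
      apply div_le_div_of_nonneg_right hθ'lt.le hσ.le
    have hdd : 0 ≤ φ0 * (θ0 / σ - θ' / σ) := mul_nonneg hφ0pos.le (by linarith)
    nlinarith [hB]
  have hθ'mem : θ' ∈ Θ σ α φ0 := ⟨⟨hθ'pos.le, hθ'le⟩, hθ'A, hθ'B⟩
  -- S stays in [0,1]
  have hSmem : ∀ θ : ℝ, 0 ≤ θ → θ ≤ σ → S σ φ0 θ ∈ Set.Icc (0:ℝ) 1 := by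
    intro θ h1 h2
    have hSeq : S σ φ0 θ = φ0 * (2 * σ - σ ^ 2 + θ ^ 2) / (2 * σ) := by
      rw [S]; field_simp; ring
    have hX : 0 ≤ 2 * σ - σ ^ 2 + θ ^ 2 := by nlinarith [sq_nonneg θ]
    constructor
    · rw [hSeq]
      exact div_nonneg (mul_nonneg hφ0pos.le hX) h2σ.le
    · rw [hSeq, div_le_one h2σ]
      nlinarith [mul_nonneg h1φ.le hX, mul_self_le_mul_self h1 h2]
  -- S strictly decreases when θ0 decreases
  have hSlt : S σ φ0 θ' < S σ φ0 θ0 := by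
    rw [S, S]
    have hsq : θ' ^ 2 < θ0 ^ 2 := by nlinarith
    have hcoef : 0 < φ0 / (2 * σ) := div_pos hφ0pos h2σ
    nlinarith [mul_pos hcoef (by linarith : (0:ℝ) < θ0 ^ 2 - θ' ^ 2)]
  have hVle : V (S σ φ0 θ0) < V (S σ φ0 θ') :=
    hVdec (hSmem θ' hθ'pos.le hθ'le) (hSmem θ0 hθ0l hθ0r) hSlt
  -- R strictly increases when θ0 decreases
  have hkey : R σ τ α φ0 θ' - R σ τ α φ0 θ0
      = (φ0 * ε / (2 * σ * (1 - φ0))) * (2 * (θ0 - c) - ε) := by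
    simp only [R, if_pos hφ0lt, θ1, hθ'_def, hc_def]
    field_simp [hσ.ne', h1φ.ne']
    ring
  have hRlt : R σ τ α φ0 θ0 < R σ τ α φ0 θ' := by
    have h1 : 0 < φ0 * ε / (2 * σ * (1 - φ0)) :=
      div_pos (mul_pos hφ0pos hεpos) (mul_pos h2σ h1φ)
    have h2 : 0 < 2 * (θ0 - c) - ε := by linarith
    nlinarith [mul_pos h1 h2]
  -- the image set is bounded above
  have hbdd : BddAbove ((fun θ => R σ τ α φ0 θ + γ * V (S σ φ0 θ)) '' Θ σ α φ0) := by
    refine ⟨σ / 2 + (σ + τ) ^ 2 / (2 * σ) + γ * V 0, ?_⟩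
    rintro y ⟨θ, hθ, rfl⟩
    obtain ⟨⟨hl, hr⟩, -, -⟩ := hθ
    have hθσ : θ ^ 2 ≤ σ ^ 2 := by nlinarith [mul_self_le_mul_self hl hr]
    have hRb : R σ τ α φ0 θ ≤ σ / 2 + (σ + τ) ^ 2 / (2 * σ) := by
      rw [R, if_pos hφ0lt]
      have hb1 : φ0 / (2 * σ) * (σ ^ 2 - θ ^ 2) ≤ σ / 2 := by
        rw [div_mul_eq_mul_div, div_le_div_iff₀ h2σ two_pos]
        nlinarith [mul_nonneg h1φ.le (by linarith : (0:ℝ) ≤ σ ^ 2 - θ ^ 2), sq_nonneg θ]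
      have hb2 : (1 - φ0) / (2 * σ) * ((σ + τ) ^ 2 - θ1 σ τ α φ0 θ ^ 2)
          ≤ (σ + τ) ^ 2 / (2 * σ) := by
        rw [div_mul_eq_mul_div, div_le_div_iff₀ h2σ h2σ]
        nlinarith [mul_nonneg (mul_nonneg hφ0pos.le (sq_nonneg (σ + τ))) h2σ.le,
          mul_nonneg (mul_nonneg h1φ.le (sq_nonneg (θ1 σ τ α φ0 θ))) h2σ.le]
      linarith
    have hVb : V (S σ φ0 θ) ≤ V 0 := by
      have hm := hSmem θ hl hr
      rcases eq_or_lt_of_le hm.1 with h | h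
      · rw [← h]
      · exact (hVdec (Set.mem_Icc.mpr ⟨le_refl 0, zero_le_one⟩) hm h).le
    show R σ τ α φ0 θ + γ * V (S σ φ0 θ) ≤ _
    exact add_le_add hRb (mul_le_mul_of_nonneg_left hVb hγ.le)
  -- final contradiction
  have hφmem : φ0 ∈ Set.Icc (0:ℝ) 1 := ⟨hφ0pos.le, hφ0lt.le⟩
  have hfix := hVfix φ0 hφmem
  rw [T] at hfix
  have hle : R σ τ α φ0 θ' + γ * V (S σ φ0 θ') ≤ V φ0 := by
    rw [hfix]
    exact le_csSup hbdd ⟨θ', hθ'mem, rfl⟩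
  have hgt : V φ0 < R σ τ α φ0 θ' + γ * V (S σ φ0 θ') := by
    rw [hopt]
    have := mul_lt_mul_of_pos_left hVle hγ
    linarith
  linarith
end

section
/- (Strict affirmative action.) Let V : [0,1] → ℝ be a continuous Bellman fixed point that is strictly decreasing on [0,1]. Let φ0 satisfy φ0* < φ0 < 1 and let θ0 ∈ Θ(φ0) attain the supremum at φ0 (i.e., V(φ0) = R(φ0,θ0) + γ·V(S(φ0,θ0))). If θ0 lies in the interior of the interval Θ(φ0) and V is differentiable at S(φ0,θ0) with strictly negative derivative there, then θ0 < θ1(φ0,θ0). -/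
/-- Strict affirmative action: beyond the tipping point, an interior optimal
threshold is strictly below the threshold for group A, provided V is
differentiable at the next state with strictly negative derivative. -/
theorem strict_affirmative_action (σ τ α γ : ℝ) (hσ : 0 < σ) (hτ : 0 < τ)
    (hστ : σ + τ ≤ 1) (hα : 0 < α) (hα1 : α < 1) (hγ : 0 < γ) (hγ1 : γ < 1)
    (V : ℝ → ℝ) (hVc : ContinuousOn V (Set.Icc (0 : ℝ) 1))
    (hVfix : ∀ φ0 ∈ Set.Icc (0 : ℝ) 1, V φ0 = T σ τ α γ V φ0)
    (hVdec : StrictAntiOn V (Set.Icc (0 : ℝ) 1))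
    (φ0 : ℝ) (hφ0gt : φstar σ τ α γ < φ0) (hφ0lt : φ0 < 1)
    (θ0 : ℝ) (hθ0 : θ0 ∈ Θ σ α φ0)
    (hopt : V φ0 = R σ τ α φ0 θ0 + γ * V (S σ φ0 θ0))
    (hint : θ0 ∈ interior (Θ σ α φ0))
    (v : ℝ) (hv : HasDerivAt V v (S σ φ0 θ0)) (hvneg : v < 0) :
    θ0 < θ1 σ τ α φ0 θ0 := by
  have hσ0 : σ ≠ 0 := ne_of_gt hσ
  have hφ0pos : (0:ℝ) < φ0 := lt_of_le_of_lt (le_max_left _ _) hφ0gt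
  have h1φ : (0:ℝ) < 1 - φ0 := by linarith
  have h1φ0 : (1:ℝ) - φ0 ≠ 0 := ne_of_gt h1φ
  have hsub : Θ σ α φ0 ⊆ Set.Icc 0 σ := fun x hx => hx.1
  have hio : θ0 ∈ Set.Ioo 0 σ := by
    have := interior_mono hsub hint
    rwa [interior_Icc] at this
  have hθ0pos : 0 < θ0 := hio.1
  -- S maps [0,σ] into [0,1]
  have hSmem : ∀ θ ∈ Set.Icc (0:ℝ) σ, S σ φ0 θ ∈ Set.Icc (0:ℝ) 1 := by
    intro θ hθ
    obtain ⟨h0, hσ'⟩ := hθ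
    have hσ1 : σ ≤ 1 := by linarith
    constructor
    · have h2 : (φ0 / (2 * σ)) * (σ ^ 2 - θ ^ 2) ≤ (φ0 / (2 * σ)) * σ ^ 2 := by
        apply mul_le_mul_of_nonneg_left (by nlinarith) (div_nonneg hφ0pos.le (by linarith))
      have h3 : (φ0 / (2 * σ)) * σ ^ 2 = φ0 * σ / 2 := by field_simp
      simp only [S]; nlinarith
    · have h2 : 0 ≤ (φ0 / (2 * σ)) * (σ ^ 2 - θ ^ 2) :=
        mul_nonneg (div_nonneg hφ0pos.le (by linarith)) (by nlinarith)
      simp only [S]; linarith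
  -- the objective function
  set f : ℝ → ℝ := fun θ => R σ τ α φ0 θ + γ * V (S σ φ0 θ) with hfdef
  have hRform : ∀ θ : ℝ, R σ τ α φ0 θ =
      (φ0 / (2 * σ)) * (σ ^ 2 - θ ^ 2)
        + ((1 - φ0) / (2 * σ)) * ((σ + τ) ^ 2 - (θ1 σ τ α φ0 θ) ^ 2) := by
    intro θ; simp [R, hφ0lt]
  -- Θ is compact
  have hΘclosed : IsClosed (Θ σ α φ0) := by
    have h2 : IsClosed {θ : ℝ | φ0 * (1 - θ / σ) ≤ α} :=
      isClosed_le (by fun_prop) continuous_const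
    have h3 : IsClosed {θ : ℝ | φ0 * (1 - θ / σ) + (1 - φ0) ≥ α} :=
      isClosed_le continuous_const (by fun_prop)
    have heq : Θ σ α φ0 = Set.Icc (0:ℝ) σ ∩
        ({θ : ℝ | φ0 * (1 - θ / σ) ≤ α} ∩ {θ : ℝ | φ0 * (1 - θ / σ) + (1 - φ0) ≥ α}) := by
      ext θ; simp [Θ, Set.mem_setOf_eq, and_assoc]
    rw [heq]
    exact isClosed_Icc.inter (h2.inter h3)
  have hΘcompact : IsCompact (Θ σ α φ0) :=
    isCompact_Icc.of_isClosed_subset hΘclosed hsub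
  have hScont : Continuous (fun θ => S σ φ0 θ) := by unfold S; fun_prop
  -- f is continuous on Θ
  have hfc : ContinuousOn f (Θ σ α φ0) := by
    apply ContinuousOn.add
    · rw [show (R σ τ α φ0) = fun θ =>
          (φ0 / (2 * σ)) * (σ ^ 2 - θ ^ 2)
            + ((1 - φ0) / (2 * σ)) * ((σ + τ) ^ 2 - (θ1 σ τ α φ0 θ) ^ 2) from
        funext hRform]
      apply Continuous.continuousOn
      unfold θ1; fun_prop
    · exact continuousOn_const.mul
        (hVc.comp hScont.continuousOn (fun θ hθ => hSmem θ (hsub hθ)))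
  -- θ0 maximizes f on Θ
  have hmax : ∀ θ ∈ Θ σ α φ0, f θ ≤ f θ0 := by
    intro θ hθ
    have hbdd : BddAbove (f '' Θ σ α φ0) :=
      (hΘcompact.image_of_continuousOn hfc).bddAbove
    have h1 : f θ ≤ sSup (f '' Θ σ α φ0) := le_csSup hbdd ⟨θ, hθ, rfl⟩
    have h2 : sSup (f '' Θ σ α φ0) = f θ0 := by
      have hφmem : φ0 ∈ Set.Icc (0:ℝ) 1 := ⟨le_of_lt hφ0pos, le_of_lt hφ0lt⟩
      have := hVfix φ0 hφmem
      rw [hopt] at this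
      exact this.symm
    linarith [h1, h2.le]
  -- local max
  have hloc : IsLocalMax f θ0 := by
    have hnhds : interior (Θ σ α φ0) ∈ nhds θ0 :=
      isOpen_interior.mem_nhds hint
    filter_upwards [hnhds] with θ hθ
    exact hmax θ (interior_subset hθ)
  -- derivative of S at θ0
  have hS : HasDerivAt (fun θ => S σ φ0 θ) (φ0 * θ0 / σ) θ0 := by
    have h1 : HasDerivAt (fun θ : ℝ => φ0 - (φ0 / (2 * σ)) * (σ ^ 2 - θ ^ 2))
        (-((φ0 / (2 * σ)) * -(2 * θ0))) θ0 := by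
      have hp : HasDerivAt (fun θ : ℝ => θ ^ 2) (2 * θ0) θ0 := by
        simpa using hasDerivAt_pow 2 θ0
      exact (((hp.const_sub (σ ^ 2)).const_mul (φ0 / (2 * σ))).const_sub φ0)
    have : -((φ0 / (2 * σ)) * -(2 * θ0)) = φ0 * θ0 / σ := by
      field_simp
    rw [this] at h1
    exact h1
  -- derivative of θ1 at θ0
  have hθ1d : HasDerivAt (fun θ => θ1 σ τ α φ0 θ) (-φ0 / (1 - φ0)) θ0 := by
    have h1 : HasDerivAt (fun θ : ℝ => σ * (1 - α) + (1 - φ0) * τ - φ0 * θ)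
        (-φ0) θ0 := by
      simpa using ((hasDerivAt_id θ0).const_mul φ0).const_sub
        (σ * (1 - α) + (1 - φ0) * τ)
    exact h1.div_const (1 - φ0)
  -- derivative of R at θ0
  have hRd : HasDerivAt (fun θ => R σ τ α φ0 θ)
      (φ0 / σ * (θ1 σ τ α φ0 θ0 - θ0)) θ0 := by
    rw [show (R σ τ α φ0) = fun θ =>
        (φ0 / (2 * σ)) * (σ ^ 2 - θ ^ 2)
          + ((1 - φ0) / (2 * σ)) * ((σ + τ) ^ 2 - (θ1 σ τ α φ0 θ) ^ 2) from
      funext hRform]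
    have hp : HasDerivAt (fun θ : ℝ => θ ^ 2) (2 * θ0) θ0 := by
      simpa using hasDerivAt_pow 2 θ0
    have h1 : HasDerivAt (fun θ : ℝ => (φ0 / (2 * σ)) * (σ ^ 2 - θ ^ 2))
        ((φ0 / (2 * σ)) * -(2 * θ0)) θ0 := by
      exact (hp.const_sub (σ ^ 2)).const_mul (φ0 / (2 * σ))
    have hsq : HasDerivAt (fun θ => (θ1 σ τ α φ0 θ) ^ 2)
        (2 * (θ1 σ τ α φ0 θ0) * (-φ0 / (1 - φ0))) θ0 := by
      simpa using hθ1d.fun_pow 2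
    have h2 : HasDerivAt (fun θ => ((1 - φ0) / (2 * σ)) * ((σ + τ) ^ 2 - (θ1 σ τ α φ0 θ) ^ 2))
        (((1 - φ0) / (2 * σ)) * -(2 * (θ1 σ τ α φ0 θ0) * (-φ0 / (1 - φ0)))) θ0 :=
      (hsq.const_sub ((σ + τ) ^ 2)).const_mul ((1 - φ0) / (2 * σ))
    have := h1.fun_add h2
    refine this.congr_deriv ?_
    field_simp
    ring
  -- derivative of f at θ0
  have hfd : HasDerivAt f
      (φ0 / σ * (θ1 σ τ α φ0 θ0 - θ0) + γ * (v * (φ0 * θ0 / σ))) θ0 := by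
    have hVS : HasDerivAt (fun θ => V (S σ φ0 θ)) (v * (φ0 * θ0 / σ)) θ0 :=
      hv.comp θ0 hS
    exact hRd.add (hVS.const_mul γ)
  have hD0 : φ0 / σ * (θ1 σ τ α φ0 θ0 - θ0) + γ * (v * (φ0 * θ0 / σ)) = 0 :=
    hloc.hasDerivAt_eq_zero hfd
  -- conclude
  have hkey : φ0 * (θ1 σ τ α φ0 θ0 - θ0) + γ * v * φ0 * θ0 = 0 := by
    field_simp at hD0
    linarith [hD0]
  nlinarith [mul_pos hγ (mul_pos (mul_pos (neg_pos.mpr hvneg) hφ0pos) hθ0pos)]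
end

section
/- (Characterization of γ*.) Let α, σ, τ, γ be reals with α > 0, σ > 0, 0 < τ < 1, 0 < γ < 1, and τ > ασ. Then 1 − (ασ/(2τ))·(1 + √(1 + 2τγ/(1−γ))) ≤ 0 if and only if γ ≥ 1 − ((1/(2τ))·(2τ/(ασ) − 1)² − 1/(2τ) + 1)⁻¹. -/
/-- Characterization of γ*: persistent affirmative action (unclamped tipping
point ≤ 0) holds iff γ ≥ 1 − ((1/(2τ))(2τ/(ασ) − 1)² − 1/(2τ) + 1)⁻¹. -/
theorem gamma_star_characterization (α σ τ γ : ℝ) (hα : 0 < α) (hσ : 0 < σ)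
    (hτ : 0 < τ) (hτ1 : τ < 1) (hγ : 0 < γ) (hγ1 : γ < 1) (hτα : τ > α * σ) :
    1 - (α * σ / (2 * τ)) * (1 + Real.sqrt (1 + 2 * τ * γ / (1 - γ))) ≤ 0 ↔
      γ ≥ 1 - ((1 / (2 * τ)) * (2 * τ / (α * σ) - 1) ^ 2 - 1 / (2 * τ) + 1)⁻¹ := by
  have hs : 0 < α * σ := mul_pos hα hσ
  have h2τ : 0 < 2 * τ := by linarith
  have h1γ : 0 < 1 - γ := by linarith
  have hX : 0 ≤ 2 * τ * γ / (1 - γ) := by positivity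
  set X := 2 * τ * γ / (1 - γ) with hXdef
  have hA2 : 2 < 2 * τ / (α * σ) := by
    rw [lt_div_iff₀ hs]; nlinarith
  set A := 2 * τ / (α * σ) - 1 with hAdef
  have hA1 : 1 < A := by simp only [hAdef]; linarith
  have hc : 0 < α * σ / (2 * τ) := by positivity
  have hinv : α * σ / (2 * τ) * (A + 1) = 1 := by
    simp only [hAdef]; field_simp; ring
  have hsq : 0 ≤ Real.sqrt (1 + X) := Real.sqrt_nonneg _
  have step1 : (1 - (α * σ / (2 * τ)) * (1 + Real.sqrt (1 + X)) ≤ 0)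
      ↔ A ≤ Real.sqrt (1 + X) := by
    constructor <;> intro h
    · have h' : α * σ / (2 * τ) * (A + 1) ≤ α * σ / (2 * τ) * (1 + Real.sqrt (1 + X)) := by
        rw [hinv]; linarith
      have := le_of_mul_le_mul_left h' hc
      linarith
    · nlinarith [mul_le_mul_of_nonneg_left h (le_of_lt hc)]
  have step2 : A ≤ Real.sqrt (1 + X) ↔ A ^ 2 ≤ 1 + X :=
    Real.le_sqrt (by linarith) (by linarith)
  set D := (1 / (2 * τ)) * A ^ 2 - 1 / (2 * τ) + 1 with hDdef
  have hA21 : 1 < A ^ 2 := by nlinarith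
  have hD : 0 < D := by
    have h0 : 0 < (1 / (2 * τ)) * (A ^ 2 - 1) :=
      mul_pos (by positivity) (by linarith)
    simp only [hDdef]; nlinarith
  have key : 2 * τ * D = A ^ 2 - 1 + 2 * τ := by
    simp only [hDdef]; field_simp
  have step3 : A ^ 2 ≤ 1 + X ↔ (A ^ 2 - 1) * (1 - γ) ≤ 2 * τ * γ := by
    rw [hXdef, ← sub_le_iff_le_add', ← le_div_iff₀ h1γ]
  have step4 : γ ≥ 1 - D⁻¹ ↔ (A ^ 2 - 1) * (1 - γ) ≤ 2 * τ * γ := by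
    rw [ge_iff_le, sub_le_comm, ← one_div, le_div_iff₀ hD]
    constructor <;> intro h
    · have h' : (1 - γ) * (2 * τ * D) ≤ 2 * τ := by
        nlinarith [mul_le_mul_of_nonneg_left h (le_of_lt h2τ)]
      rw [key] at h'; nlinarith
    · have h' : 2 * τ * ((1 - γ) * D) ≤ 2 * τ * 1 := by
        rw [show 2 * τ * ((1 - γ) * D) = (1 - γ) * (2 * τ * D) by ring, key]; nlinarith
      exact le_of_mul_le_mul_left h' h2τ
  rw [step1, step2, step3, ← step4]
end

section
/- (Characterization of τ*.) Let α, τ, γ be reals with α > 0, 0 < τ < 1, 0 < γ < 1, set σ = 1 − τ, and assume 2τ > ασ. Then 1 − (ασ/(2τ))·(1 + √(1 + 2τγ/(1−γ))) ≤ 0 if and only if τ ≤ 1 − (−(1+α) + √((1+α)² + 2γα²/(1−γ))) / (γα²/(1−γ)). -/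
set_option maxHeartbeats 800000


/-- Characterization of τ*: with σ = 1 − τ and 2τ > ασ, persistent affirmative
action (unclamped tipping point ≤ 0) holds iff
τ ≤ 1 − (−(1+α) + √((1+α)² + 2γα²/(1−γ))) / (γα²/(1−γ)). -/
theorem tau_star_characterization (α τ γ : ℝ) (hα : 0 < α) (hτ : 0 < τ)
    (hτ1 : τ < 1) (hγ : 0 < γ) (hγ1 : γ < 1)
    (σ : ℝ) (hσ : σ = 1 - τ) (h2τ : 2 * τ > α * σ) :
    1 - (α * σ / (2 * τ)) * (1 + Real.sqrt (1 + 2 * τ * γ / (1 - γ))) ≤ 0 ↔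
      τ ≤ 1 - (-(1 + α) + Real.sqrt ((1 + α) ^ 2 + 2 * γ * α ^ 2 / (1 - γ))) /
        (γ * α ^ 2 / (1 - γ)) := by
  have h1γ : (0:ℝ) < 1 - γ := by linarith
  have hσpos : 0 < σ := by rw [hσ]; linarith
  have hασ : 0 < α * σ := mul_pos hα hσpos
  set g : ℝ := γ / (1 - γ) with hg
  have hgpos : 0 < g := div_pos hγ h1γ
  have hga : 0 < g * α ^ 2 := by positivity
  have hL : (1 - (α * σ / (2 * τ)) * (1 + Real.sqrt (1 + 2 * τ * γ / (1 - γ))) ≤ 0)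
      ↔ 2 ≤ g * α ^ 2 * σ ^ 2 + 2 * (1 + α) * σ := by
    have hXe : 1 + 2 * τ * γ / (1 - γ) = 1 + 2 * τ * g := by rw [hg]; ring
    have hXpos : (0:ℝ) ≤ 1 + 2 * τ * g := by positivity
    rw [hXe, sub_nonpos,
      show α * σ / (2 * τ) * (1 + Real.sqrt (1 + 2 * τ * g))
        = (α * σ) * (1 + Real.sqrt (1 + 2 * τ * g)) / (2 * τ) from by ring,
      le_div_iff₀ (by linarith : (0:ℝ) < 2 * τ)]
    constructor
    · intro h
      have h2 : 2 * τ - α * σ ≤ (α * σ) * Real.sqrt (1 + 2 * τ * g) := by nlinarith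
      have h0 : 0 ≤ 2 * τ - α * σ := by linarith
      have h3 : (2 * τ - α * σ) ^ 2 ≤ ((α * σ) * Real.sqrt (1 + 2 * τ * g)) ^ 2 := by
        have := mul_nonneg hασ.le (Real.sqrt_nonneg (1 + 2 * τ * g))
        nlinarith
      rw [mul_pow, Real.sq_sqrt hXpos] at h3
      rw [hσ] at h3 ⊢
      nlinarith [mul_pos hτ hgpos, sq_nonneg (1 - τ)]
    · intro h
      have h3 : (2 * τ - α * σ) ^ 2 ≤ (α * σ) ^ 2 * (1 + 2 * τ * g) := by
        rw [hσ] at h ⊢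
        nlinarith [mul_pos hτ hgpos]
      have h4 := Real.sqrt_le_sqrt h3
      rw [Real.sqrt_sq (by linarith : (0:ℝ) ≤ 2 * τ - α * σ),
        Real.sqrt_mul (by positivity) (1 + 2 * τ * g),
        Real.sqrt_sq hασ.le] at h4
      nlinarith
  have hR : (τ ≤ 1 - (-(1 + α) + Real.sqrt ((1 + α) ^ 2 + 2 * γ * α ^ 2 / (1 - γ))) /
        (γ * α ^ 2 / (1 - γ)))
      ↔ 2 ≤ g * α ^ 2 * σ ^ 2 + 2 * (1 + α) * σ := by
    have hDe : (1 + α) ^ 2 + 2 * γ * α ^ 2 / (1 - γ) = (1 + α) ^ 2 + 2 * g * α ^ 2 := by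
      rw [hg]; ring
    have hce : γ * α ^ 2 / (1 - γ) = g * α ^ 2 := by rw [hg]; ring
    have hDpos : (0:ℝ) ≤ (1 + α) ^ 2 + 2 * g * α ^ 2 := by positivity
    rw [hDe, hce]
    have hy : (0:ℝ) ≤ 1 + α + g * α ^ 2 * σ := by positivity
    constructor
    · intro h
      have h1 : (-(1 + α) + Real.sqrt ((1 + α) ^ 2 + 2 * g * α ^ 2)) / (g * α ^ 2) ≤ σ := by
        rw [hσ]; linarith
      rw [div_le_iff₀ hga] at h1
      have h2 : Real.sqrt ((1 + α) ^ 2 + 2 * g * α ^ 2) ≤ 1 + α + g * α ^ 2 * σ := by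
        nlinarith
      have h3 : (1 + α) ^ 2 + 2 * g * α ^ 2 ≤ (1 + α + g * α ^ 2 * σ) ^ 2 := by
        have := Real.sq_sqrt hDpos
        nlinarith [Real.sqrt_nonneg ((1 + α) ^ 2 + 2 * g * α ^ 2)]
      nlinarith [mul_pos hga hga, sq_nonneg σ]
    · intro h
      have h3 : (1 + α) ^ 2 + 2 * g * α ^ 2 ≤ (1 + α + g * α ^ 2 * σ) ^ 2 := by
        nlinarith [mul_nonneg hga.le (by linarith : (0:ℝ) ≤ g * α ^ 2 * σ ^ 2 + 2 * (1 + α) * σ - 2)]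
      have h4 := Real.sqrt_le_sqrt h3
      rw [Real.sqrt_sq hy] at h4
      have h5 : (-(1 + α) + Real.sqrt ((1 + α) ^ 2 + 2 * g * α ^ 2)) / (g * α ^ 2) ≤ σ := by
        rw [div_le_iff₀ hga]; linarith
      rw [hσ] at h5; linarith
  rw [hL, hR]
end
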